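/- arXiv:2003.05882 — 12 statements merged into one kernel-verified Lean document; each statement's English description precedes it below -/
import Mathlib

section
/- Let E be a parallel network with capacities c, let 0 ≤ r ≤ C(E), let f ∈ F(c,r), and let 0 ≤ π̲^a ≤ π̄^a ≤ C(E). Let α = { C(E') : E' ⊆ E } (a finite set with at most 2^|E| elements). Then sup_{r^a ∈ [π̲^a, π̄^a]} ( B*(f, r^a) − B^SE(r, r^a) ) = max_{r^a ∈ (α ∩ [π̲^a, π̄^a]) ∪ {π̲^a, π̄^a}} ( B*(f, r^a) − B^SE(r, r^a) ). -/
open Finset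

noncomputable section

/-- Set of feasible profiles routing `r` units of traffic with per-edge capacities `c`. -/
def Feas {E : Type*} [Fintype E] (c : E → ℝ) (r : ℝ) : Set (E → ℝ) :=
  {f | ∑ e, f e = r ∧ ∀ e, 0 ≤ f e ∧ f e ≤ c e}

/-- Total blocked traffic. -/
def Blocked {E : Type*} [Fintype E] (c f fa : E → ℝ) : ℝ :=
  ∑ e, max (f e + fa e - c e) 0

/-- Best-response value of the attacker against routing `f` with budget `ra`. -/
def Bstar {E : Type*} [Fintype E] (c : E → ℝ) (f : E → ℝ) (ra : ℝ) : ℝ :=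
  sSup ((fun fa => Blocked c f fa) '' Feas c ra)

/-- Stackelberg value. -/
def BSE {E : Type*} [Fintype E] (c : E → ℝ) (r ra : ℝ) : ℝ :=
  sInf ((fun f => Bstar c f ra) '' Feas c r)

/-- max over nonempty E' ⊆ E of (C(E') - r)/|E'|. -/
def gval {E : Type*} [Fintype E] [Nonempty E] (c : E → ℝ) (r : ℝ) : ℝ :=
  (univ.powerset.filter fun s : Finset E => s.Nonempty).sup'
    ⟨univ, by simp [Finset.univ_nonempty]⟩
    (fun s => ((∑ e ∈ s, c e) - r) / s.card)

/-- max over nonempty E' ⊆ E of (r - C(E \ E'))/|E'|. -/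
def hval {E : Type*} [Fintype E] [Nonempty E] [DecidableEq E] (c : E → ℝ) (r : ℝ) : ℝ :=
  (univ.powerset.filter fun s : Finset E => s.Nonempty).sup'
    ⟨univ, by simp [Finset.univ_nonempty]⟩
    (fun s => (r - ∑ e ∈ univ \ s, c e) / s.card)

/-- `fa` is a best-response attack to `f`. -/
def IsBestResponse {E : Type*} [Fintype E] (c : E → ℝ) (ra : ℝ) (f fa : E → ℝ) : Prop :=
  fa ∈ Feas c ra ∧ ∀ fa' ∈ Feas c ra, Blocked c f fa' ≤ Blocked c f fa

/-- Nash equilibrium. -/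
def IsNash {E : Type*} [Fintype E] (c : E → ℝ) (r ra : ℝ) (f fa : E → ℝ) : Prop :=
  f ∈ Feas c r ∧ fa ∈ Feas c ra ∧
    (∀ f' ∈ Feas c r, Blocked c f fa ≤ Blocked c f' fa) ∧
    (∀ fa' ∈ Feas c ra, Blocked c f fa' ≤ Blocked c f fa)

/-- Stackelberg equilibrium. -/
def IsStackelberg {E : Type*} [Fintype E] (c : E → ℝ) (r ra : ℝ) (f fa : E → ℝ) : Prop :=
  f ∈ Feas c r ∧ fa ∈ Feas c ra ∧
    (∀ f' ∈ Feas c r, Bstar c f ra ≤ Bstar c f' ra) ∧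
    (∀ fa' ∈ Feas c ra, Blocked c f fa' ≤ Blocked c f fa)

namespace Stmt3Aux

variable {E : Type*} [Fintype E]

/-- value of attacking set `T` with budget `x`. -/
def hT (c f : E → ℝ) (T : Finset E) (x : ℝ) : ℝ :=
  (∑ e ∈ T, f e) + min (x - ∑ e ∈ T, c e) 0

/-- closed form for `Bstar`. -/
def Phi (c f : E → ℝ) (x : ℝ) : ℝ :=
  (univ.powerset : Finset (Finset E)).sup' ⟨∅, Finset.empty_mem_powerset _⟩
    (fun T => hT c f T x)

lemma hT_mono (c f : E → ℝ) (T : Finset E) {x y : ℝ} (h : x ≤ y) :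
    hT c f T x ≤ hT c f T y :=
  add_le_add_right (min_le_min (by linarith) le_rfl) _

lemma hT_lip (c f : E → ℝ) (T : Finset E) {x y : ℝ} (h : x ≤ y) :
    hT c f T y ≤ hT c f T x + (y - x) := by
  unfold hT
  rcases le_total (x - ∑ e ∈ T, c e) 0 with h' | h' <;>
    rcases le_total (y - ∑ e ∈ T, c e) 0 with h'' | h'' <;>
      simp [min_eq_left, min_eq_right, *] <;> linarith

lemma phi_mono (c f : E → ℝ) {x y : ℝ} (h : x ≤ y) : Phi c f x ≤ Phi c f y := by
  apply Finset.sup'_le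
  intro T hTm
  exact (hT_mono c f T h).trans (Finset.le_sup' (fun T => hT c f T y) hTm)

lemma phi_lip (c f : E → ℝ) {x y : ℝ} (h : x ≤ y) : Phi c f y ≤ Phi c f x + (y - x) := by
  apply Finset.sup'_le
  intro T hTm
  exact (hT_lip c f T h).trans
    (add_le_add_left (Finset.le_sup' (fun T => hT c f T x) hTm) _)

lemma phi_nonneg (c f : E → ℝ) {x : ℝ} (h : 0 ≤ x) : 0 ≤ Phi c f x := by
  have h0 : hT c f (∅ : Finset E) x = 0 := by simp [hT, min_eq_right h]
  calc (0:ℝ) = hT c f ∅ x := h0.symm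
    _ ≤ Phi c f x := Finset.le_sup' (fun T => hT c f T x) (Finset.empty_mem_powerset _)

/-- proportional fill on a subset. -/
lemma exists_fill (c : E → ℝ) (hc : ∀ e, 0 ≤ c e) (S : Finset E) (ρ : ℝ)
    (h0 : 0 ≤ ρ) (hρ : ρ ≤ ∑ e ∈ S, c e) :
    ∃ fa : E → ℝ, (∀ e, 0 ≤ fa e ∧ fa e ≤ c e) ∧ (∑ e, fa e) = ρ ∧ ∀ e ∉ S, fa e = 0 := by
  classical
  by_cases hC : (∑ e ∈ S, c e) = 0
  · have hρ0 : ρ = 0 := le_antisymm (hρ.trans_eq hC) h0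
    exact ⟨fun _ => 0, fun e => ⟨le_rfl, hc e⟩, by simp [hρ0], fun _ _ => rfl⟩
  · have hCpos : 0 < ∑ e ∈ S, c e :=
      lt_of_le_of_ne (Finset.sum_nonneg fun e _ => hc e) (Ne.symm hC)
    refine ⟨fun e => if e ∈ S then ρ * c e / (∑ e ∈ S, c e) else 0, ?_, ?_, ?_⟩
    · intro e
      by_cases he : e ∈ S
      · simp only [he, if_true]
        constructor
        · exact div_nonneg (mul_nonneg h0 (hc e)) hCpos.le
        · rw [div_le_iff₀ hCpos]
          calc ρ * c e ≤ (∑ e ∈ S, c e) * c e := by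
                exact mul_le_mul_of_nonneg_right hρ (hc e)
            _ = c e * (∑ e ∈ S, c e) := by ring
      · simp [he, hc e]
    · rw [Finset.sum_ite_mem, Finset.univ_inter, ← Finset.sum_div, ← Finset.mul_sum]
      field_simp
    · intro e he; simp [he]
lemma blocked_le_phi {c : E → ℝ} (f : E → ℝ) {ra : ℝ} {fa : E → ℝ}
    (hfa : fa ∈ Feas c ra) : Blocked c f fa ≤ Phi c f ra := by
  classical
  obtain ⟨hsum, hb⟩ := hfa
  set T : Finset E := univ.filter (fun e => c e < f e + fa e) with hTdef
  have hTm : T ∈ (univ : Finset E).powerset := Finset.mem_powerset.mpr (Finset.subset_univ T)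
  have hmax : ∀ e, max (f e + fa e - c e) 0
      = if c e < f e + fa e then f e + fa e - c e else 0 := by
    intro e; split_ifs with h
    · exact max_eq_left (by linarith)
    · push_neg at h; exact max_eq_right (by linarith)
  have hBl : Blocked c f fa = ∑ e ∈ T, (f e + fa e - c e) := by
    rw [Blocked]
    simp_rw [hmax]
    exact (Finset.sum_filter _ _).symm
  have h1 : ∑ e ∈ T, fa e ≤ ra := by
    rw [← hsum]
    exact Finset.sum_le_sum_of_subset_of_nonneg (Finset.subset_univ T)
      (fun e _ _ => (hb e).1)
  have h2 : ∑ e ∈ T, fa e ≤ ∑ e ∈ T, c e :=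
    Finset.sum_le_sum (fun e _ => (hb e).2)
  have h3 : Blocked c f fa ≤ hT c f T ra := by
    rw [hBl, hT]
    have : ∑ e ∈ T, (f e + fa e - c e)
        = (∑ e ∈ T, f e) + ((∑ e ∈ T, fa e) - ∑ e ∈ T, c e) := by
      rw [Finset.sum_sub_distrib, Finset.sum_add_distrib]; ring
    rw [this]
    have : (∑ e ∈ T, fa e) - ∑ e ∈ T, c e ≤ min (ra - ∑ e ∈ T, c e) 0 :=
      le_min (by linarith) (by linarith)
    linarith
  exact h3.trans (Finset.le_sup' (fun T => hT c f T ra) hTm)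

lemma exists_attack {c : E → ℝ} (hc : ∀ e, 0 ≤ c e) (f : E → ℝ) {ra : ℝ}
    (h0 : 0 ≤ ra) (hra : ra ≤ ∑ e, c e) (T : Finset E) :
    ∃ fa ∈ Feas c ra, hT c f T ra ≤ Blocked c f fa := by
  classical
  rcases le_or_gt ra (∑ e ∈ T, c e) with hle | hlt
  · obtain ⟨fa, hb, hs, hsupp⟩ := exists_fill c hc T ra h0 hle
    refine ⟨fa, ⟨hs, hb⟩, ?_⟩
    have hsumT : ∑ e ∈ T, fa e = ra := by
      rw [← hs]
      exact Finset.sum_subset (Finset.subset_univ T) (fun e _ he => hsupp e he)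
    have h1 : ∑ e ∈ T, (f e + fa e - c e) ≤ ∑ e ∈ T, max (f e + fa e - c e) 0 :=
      Finset.sum_le_sum (fun e _ => le_max_left _ _)
    have h2 : ∑ e ∈ T, max (f e + fa e - c e) 0 ≤ Blocked c f fa :=
      Finset.sum_le_sum_of_subset_of_nonneg (Finset.subset_univ T)
        (fun e _ _ => le_max_right _ _)
    have h3 : hT c f T ra = (∑ e ∈ T, f e) + (ra - ∑ e ∈ T, c e) := by
      rw [hT, min_eq_left (by linarith)]
    have h4 : ∑ e ∈ T, (f e + fa e - c e)
        = (∑ e ∈ T, f e) + (ra - ∑ e ∈ T, c e) := by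
      rw [Finset.sum_sub_distrib, Finset.sum_add_distrib, hsumT]; ring
    linarith
  · obtain ⟨g, hgb, hgs, hgsupp⟩ := exists_fill c hc (univ \ T) (ra - ∑ e ∈ T, c e)
      (by linarith)
      (by rw [Finset.sum_sdiff_eq_sub (Finset.subset_univ T)]; linarith)
    have hgT : ∀ e ∈ T, g e = 0 := fun e he => hgsupp e (by simp [he])
    refine ⟨fun e => (if e ∈ T then c e else 0) + g e, ⟨?_, ?_⟩, ?_⟩
    · rw [Finset.sum_add_distrib, Finset.sum_ite_mem, Finset.univ_inter, hgs]; ring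
    · intro e
      by_cases he : e ∈ T
      · simp [he, hgT e he, hc e]
      · simp only [he, if_false, zero_add]
        exact hgb e
    · have h3 : hT c f T ra = ∑ e ∈ T, f e := by
        rw [hT, min_eq_right (by linarith)]; ring
      have h1 : ∑ e ∈ T, f e
          ≤ ∑ e ∈ T, max (f e + ((if e ∈ T then c e else 0) + g e) - c e) 0 := by
        apply Finset.sum_le_sum
        intro e he
        simp only [he, if_true, hgT e he]
        have : f e + (c e + 0) - c e = f e := by ring
        rw [this]
        exact le_max_left _ _
      have h2 : ∑ e ∈ T, max (f e + ((if e ∈ T then c e else 0) + g e) - c e) 0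
          ≤ Blocked c f (fun e => (if e ∈ T then c e else 0) + g e) :=
        Finset.sum_le_sum_of_subset_of_nonneg (Finset.subset_univ T)
          (fun e _ _ => le_max_right _ _)
      rw [h3]; exact h1.trans h2

lemma feas_nonempty {c : E → ℝ} (hc : ∀ e, 0 ≤ c e) {ρ : ℝ}
    (h0 : 0 ≤ ρ) (hρ : ρ ≤ ∑ e, c e) : (Feas c ρ).Nonempty := by
  obtain ⟨fa, hb, hs, _⟩ := exists_fill c hc univ ρ h0 (by simpa using hρ)
  exact ⟨fa, hs, hb⟩

lemma bstar_eq {c : E → ℝ} (hc : ∀ e, 0 ≤ c e) (f : E → ℝ) {ra : ℝ}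
    (h0 : 0 ≤ ra) (hra : ra ≤ ∑ e, c e) : Bstar c f ra = Phi c f ra := by
  have hbdd : ∀ b ∈ (fun fa => Blocked c f fa) '' Feas c ra, b ≤ Phi c f ra := by
    rintro b ⟨fa, hfa, rfl⟩
    exact blocked_le_phi f hfa
  apply le_antisymm
  · exact csSup_le ((feas_nonempty hc h0 hra).image _) hbdd
  · obtain ⟨T, hTmem, hPhi⟩ := Finset.exists_mem_eq_sup'
      (⟨∅, Finset.empty_mem_powerset _⟩ : (univ : Finset E).powerset.Nonempty)
      (fun T => hT c f T ra)
    obtain ⟨fa, hfa, hle⟩ := exists_attack hc f h0 hra T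
    have : Phi c f ra = hT c f T ra := hPhi
    rw [this]
    exact hle.trans (le_csSup ⟨Phi c f ra, hbdd⟩ ⟨fa, hfa, rfl⟩)
lemma bstar_nonneg {c : E → ℝ} (hc : ∀ e, 0 ≤ c e) (f : E → ℝ) {ra : ℝ}
    (h0 : 0 ≤ ra) (hra : ra ≤ ∑ e, c e) : 0 ≤ Bstar c f ra := by
  rw [bstar_eq hc f h0 hra]; exact phi_nonneg c f h0

lemma bse_le_bstar {c : E → ℝ} {r ra : ℝ} (hc : ∀ e, 0 ≤ c e)
    (h0 : 0 ≤ ra) (hra : ra ≤ ∑ e, c e) {f : E → ℝ} (hf : f ∈ Feas c r) :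
    BSE c r ra ≤ Bstar c f ra :=
  csInf_le ⟨0, by rintro b ⟨f', _, rfl⟩; exact bstar_nonneg hc f' h0 hra⟩ ⟨f, hf, rfl⟩

lemma bse_mono {c : E → ℝ} {r : ℝ} (hc : ∀ e, 0 ≤ c e) (hr0 : 0 ≤ r)
    (hrC : r ≤ ∑ e, c e) {x y : ℝ} (h0 : 0 ≤ x) (hxy : x ≤ y) (hy : y ≤ ∑ e, c e) :
    BSE c r x ≤ BSE c r y := by
  apply le_csInf ((feas_nonempty hc hr0 hrC).image _)
  rintro b ⟨f, hf, rfl⟩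
  have h1 : Bstar c f x ≤ Bstar c f y := by
    rw [bstar_eq hc f h0 (hxy.trans hy), bstar_eq hc f (h0.trans hxy) hy]
    exact phi_mono c f hxy
  exact (bse_le_bstar hc h0 (hxy.trans hy) hf).trans h1

lemma bse_lip {c : E → ℝ} {r : ℝ} (hc : ∀ e, 0 ≤ c e) (hr0 : 0 ≤ r)
    (hrC : r ≤ ∑ e, c e) {x y : ℝ} (h0 : 0 ≤ x) (hxy : x ≤ y) (hy : y ≤ ∑ e, c e) :
    BSE c r y ≤ BSE c r x + (y - x) := by
  rw [← sub_le_iff_le_add]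
  apply le_csInf ((feas_nonempty hc hr0 hrC).image _)
  rintro b ⟨f, hf, rfl⟩
  have h1 : Bstar c f y ≤ Bstar c f x + (y - x) := by
    rw [bstar_eq hc f h0 (hxy.trans hy), bstar_eq hc f (h0.trans hxy) hy]
    exact phi_lip c f hxy
  have h2 : BSE c r y ≤ Bstar c f y := bse_le_bstar hc (h0.trans hxy) hy hf
  linarith

end Stmt3Aux

open Stmt3Aux

/-- The supremum of `B*(f,·) - B^SE(r,·)` over the interval `[lo, hi]` is
attained on the finite set `(α ∩ [lo,hi]) ∪ {lo, hi}` where `α = {C(E') : E' ⊆ E}`. -/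
theorem stmt3 {E : Type*} [Fintype E] [Nonempty E]
    (c : E → ℝ) (hc : ∀ e, 0 ≤ c e) (r : ℝ) (hr0 : 0 ≤ r) (hrC : r ≤ ∑ e, c e)
    (f : E → ℝ) (hf : f ∈ Feas c r)
    (lo hi : ℝ) (hlo : 0 ≤ lo) (hlh : lo ≤ hi) (hhi : hi ≤ ∑ e, c e) :
    sSup ((fun ra => Bstar c f ra - BSE c r ra) '' Set.Icc lo hi) =
      (((univ.powerset.image fun s : Finset E => ∑ e ∈ s, c e).filter
          fun x => lo ≤ x ∧ x ≤ hi) ∪ {lo, hi}).sup'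
        ⟨lo, by simp⟩ (fun ra => Bstar c f ra - BSE c r ra) := by
  classical
  set g : ℝ → ℝ := fun ra => Bstar c f ra - BSE c r ra with hg
  set Bk : Finset ℝ := ((univ.powerset.image fun s : Finset E => ∑ e ∈ s, c e).filter
          fun x => lo ≤ x ∧ x ≤ hi) ∪ {lo, hi} with hBk
  have hloBk : lo ∈ Bk := Finset.mem_union_right _ (by simp)
  have hhiBk : hi ∈ Bk := Finset.mem_union_right _ (by simp)
  have hne : Bk.Nonempty := ⟨lo, hloBk⟩
  have hmem : ∀ x ∈ Bk, lo ≤ x ∧ x ≤ hi := by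
    intro x hx
    rcases Finset.mem_union.mp hx with h | h
    · exact (Finset.mem_filter.mp h).2
    · rcases Finset.mem_insert.mp h with rfl | h
      · exact ⟨le_rfl, hlh⟩
      · rw [Finset.mem_singleton] at h; subst h; exact ⟨hlh, le_rfl⟩
  have key : ∀ ra ∈ Set.Icc lo hi, g ra ≤ Bk.sup' hne g := by
    rintro ra ⟨h1, h2⟩
    have hra0 : 0 ≤ ra := hlo.trans h1
    have hraD : ra ≤ ∑ e, c e := h2.trans hhi
    have hAne : (Bk.filter (· ≤ ra)).Nonempty :=
      ⟨lo, Finset.mem_filter.mpr ⟨hloBk, h1⟩⟩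
    have hBne : (Bk.filter (ra ≤ ·)).Nonempty :=
      ⟨hi, Finset.mem_filter.mpr ⟨hhiBk, h2⟩⟩
    set a : ℝ := (Bk.filter (· ≤ ra)).max' hAne with ha
    set b : ℝ := (Bk.filter (ra ≤ ·)).min' hBne with hb
    have haBk : a ∈ Bk := (Finset.mem_filter.mp ((Bk.filter (· ≤ ra)).max'_mem hAne)).1
    have ha_le : a ≤ ra := (Finset.mem_filter.mp ((Bk.filter (· ≤ ra)).max'_mem hAne)).2
    have hbBk : b ∈ Bk := (Finset.mem_filter.mp ((Bk.filter (ra ≤ ·)).min'_mem hBne)).1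
    have hb_ge : ra ≤ b := (Finset.mem_filter.mp ((Bk.filter (ra ≤ ·)).min'_mem hBne)).2
    have ha_lo : lo ≤ a := (hmem a haBk).1
    have hb_hi : b ≤ hi := (hmem b hbBk).2
    have hbD : b ≤ ∑ e, c e := hb_hi.trans hhi
    have ha0 : 0 ≤ a := hlo.trans ha_lo
    have gap : ∀ T : Finset E, (∑ e ∈ T, c e) ≤ a ∨ b ≤ ∑ e ∈ T, c e := by
      intro T
      by_contra hcon
      push_neg at hcon
      obtain ⟨hc1, hc2⟩ := hcon
      have hCT : (∑ e ∈ T, c e) ∈ Bk := by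
        rw [hBk]
        apply Finset.mem_union_left
        exact Finset.mem_filter.mpr
          ⟨Finset.mem_image.mpr ⟨T, Finset.mem_powerset.mpr (Finset.subset_univ T), rfl⟩,
           ha_lo.trans hc1.le, hc2.le.trans hb_hi⟩
      rcases le_total (∑ e ∈ T, c e) ra with h | h
      · have hmm : (∑ e ∈ T, c e) ∈ Bk.filter (· ≤ ra) := Finset.mem_filter.mpr ⟨hCT, h⟩
        have h9 : (∑ e ∈ T, c e) ≤ a :=
          Finset.le_max' (Bk.filter (· ≤ ra)) (∑ e ∈ T, c e) hmm
        exact absurd h9 (not_le.mpr hc1)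
      · have hmm : (∑ e ∈ T, c e) ∈ Bk.filter (ra ≤ ·) := Finset.mem_filter.mpr ⟨hCT, h⟩
        have h9 : b ≤ ∑ e ∈ T, c e :=
          Finset.min'_le (Bk.filter (ra ≤ ·)) (∑ e ∈ T, c e) hmm
        exact absurd h9 (not_le.mpr hc2)
    have hBra : Bstar c f ra = Phi c f ra := bstar_eq hc f hra0 hraD
    obtain ⟨T, hTm, hTeq⟩ := Finset.exists_mem_eq_sup'
      (⟨∅, Finset.empty_mem_powerset _⟩ : (univ : Finset E).powerset.Nonempty)
      (fun T => hT c f T ra)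
    have hPhiT : Phi c f ra = hT c f T ra := hTeq
    rcases gap T with hcase | hcase
    · have h5 : Bstar c f ra = ∑ e ∈ T, f e := by
        rw [hBra, hPhiT, hT, min_eq_right (by linarith)]
        ring
      have h6 : (∑ e ∈ T, f e) ≤ Bstar c f a := by
        rw [bstar_eq hc f ha0 (ha_le.trans hraD)]
        have h7 : hT c f T a = ∑ e ∈ T, f e := by
          rw [hT, min_eq_right (by linarith)]; ring
        rw [← h7]
        exact Finset.le_sup' (fun T => hT c f T a) hTm
      have h7 : BSE c r a ≤ BSE c r ra := bse_mono hc hr0 hrC ha0 ha_le hraD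
      have h8 : g ra ≤ g a := by simp only [hg]; linarith
      exact h8.trans (Finset.le_sup' g haBk)
    · have h5 : Bstar c f ra = (∑ e ∈ T, f e) + (ra - ∑ e ∈ T, c e) := by
        rw [hBra, hPhiT, hT, min_eq_left (by linarith)]
      have h6 : (∑ e ∈ T, f e) + (b - ∑ e ∈ T, c e) ≤ Bstar c f b := by
        rw [bstar_eq hc f (hra0.trans hb_ge) hbD]
        have h7 : hT c f T b = (∑ e ∈ T, f e) + (b - ∑ e ∈ T, c e) := by
          rw [hT, min_eq_left (by linarith)]
        rw [← h7]
        exact Finset.le_sup' (fun T => hT c f T b) hTm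
      have h7 : BSE c r b ≤ BSE c r ra + (b - ra) := bse_lip hc hr0 hrC hra0 hb_ge hbD
      have h8 : g ra ≤ g b := by simp only [hg]; linarith
      exact h8.trans (Finset.le_sup' g hbBk)
  have hbdd : ∀ y ∈ g '' Set.Icc lo hi, y ≤ Bk.sup' hne g := by
    rintro y ⟨ra, hra, rfl⟩
    exact key ra hra
  apply le_antisymm
  · exact csSup_le ⟨g lo, ⟨lo, ⟨le_rfl, hlh⟩, rfl⟩⟩ hbdd
  · apply Finset.sup'_le
    intro x hx
    exact le_csSup ⟨Bk.sup' hne g, hbdd⟩ ⟨x, ⟨(hmem x hx).1, (hmem x hx).2⟩, rfl⟩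
end
end

section
/- Consider a two-link parallel network with capacities 0 < c_1 ≤ c_2, routing demand r with c_2 − c_1 ≤ r ≤ 2 c_1, and an uncertainty interval π^a = [π̲^a, π̄^a] with 0 ≤ π̲^a ≤ π̄^a ≤ c_1 + c_2. Then the value of information satisfies: V(π^a) = 0 if [π̲^a, π̄^a] ∩ [c_1, c_2] = ∅, and V(π^a) = (1/4)( min{π̄^a, c_2} − max{π̲^a, c_1} ) otherwise. -/
open Finset

noncomputable section

section Stmt4Aux

lemma mem_feas {c₁ c₂ r : ℝ} {f : Fin 2 → ℝ} :
    f ∈ Feas ![c₁, c₂] r ↔ f 0 + f 1 = r ∧ 0 ≤ f 0 ∧ f 0 ≤ c₁ ∧ 0 ≤ f 1 ∧ f 1 ≤ c₂ := by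
  constructor
  · rintro ⟨hs, hb⟩
    refine ⟨by simpa [Fin.sum_univ_two] using hs, (hb 0).1, by simpa using (hb 0).2,
      (hb 1).1, by simpa using (hb 1).2⟩
  · rintro ⟨hs, h1, h2, h3, h4⟩
    refine ⟨by simpa [Fin.sum_univ_two] using hs, ?_⟩
    intro e
    fin_cases e <;> simp_all

lemma blocked_eq {c₁ c₂ : ℝ} (f fa : Fin 2 → ℝ) :
    Blocked ![c₁, c₂] f fa = max (f 0 + fa 0 - c₁) 0 + max (f 1 + fa 1 - c₂) 0 := by
  simp [Blocked, Fin.sum_univ_two]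

lemma pair_feas {c₁ c₂ r a b : ℝ} (hab : a + b = r) (ha : 0 ≤ a) (ha' : a ≤ c₁)
    (hb : 0 ≤ b) (hb' : b ≤ c₂) : ![a, b] ∈ Feas ![c₁, c₂] r :=
  mem_feas.mpr ⟨by simpa using hab, by simpa using ha, by simpa using ha',
    by simpa using hb, by simpa using hb'⟩

lemma blocked_pair {c₁ c₂ : ℝ} (f : Fin 2 → ℝ) (a b : ℝ) :
    Blocked ![c₁, c₂] f ![a, b] = max (f 0 + a - c₁) 0 + max (f 1 + b - c₂) 0 := by
  rw [blocked_eq]; simp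

lemma bstar_low {c₁ c₂ ra : ℝ} (hc : c₁ ≤ c₂) (f : Fin 2 → ℝ)
    (hf0 : 0 ≤ f 0) (hf0' : f 0 ≤ c₁) (hf1 : 0 ≤ f 1) (hf1' : f 1 ≤ c₂)
    (h0 : 0 ≤ ra) (h1 : ra ≤ c₁) :
    Bstar ![c₁, c₂] f ra = max (f 0 + ra - c₁) (max (f 1 + ra - c₂) 0) := by
  apply IsGreatest.csSup_eq
  constructor
  · rcases le_total (max (f 1 + ra - c₂) 0) (f 0 + ra - c₁) with h | h
    · refine ⟨![ra, 0], pair_feas (by ring) h0 h1 le_rfl (by linarith), ?_⟩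
      have := blocked_pair (c₁ := c₁) (c₂ := c₂) f ra 0
      dsimp only
      rw [this]
      simp only [max_def] at h ⊢; split_ifs at h ⊢ <;> linarith
    · refine ⟨![0, ra], pair_feas (by ring) le_rfl (by linarith) h0 (by linarith), ?_⟩
      have := blocked_pair (c₁ := c₁) (c₂ := c₂) f 0 ra
      dsimp only
      rw [this]
      simp only [max_def] at h ⊢; split_ifs at h ⊢ <;> linarith
  · rintro x ⟨fa, hfa, rfl⟩
    obtain ⟨hs, g1, g2, g3, g4⟩ := mem_feas.mp hfa
    dsimp only
    rw [blocked_eq]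
    simp only [max_def]; split_ifs <;> linarith

lemma bstar_mid {c₁ c₂ ra : ℝ} (hc : c₁ ≤ c₂) (f : Fin 2 → ℝ)
    (hf0 : 0 ≤ f 0) (hf0' : f 0 ≤ c₁) (hf1 : 0 ≤ f 1) (hf1' : f 1 ≤ c₂)
    (h0c : 0 ≤ c₁) (h0 : c₁ ≤ ra) (h1 : ra ≤ c₂) :
    Bstar ![c₁, c₂] f ra = max (f 0) (f 1 + ra - c₂) := by
  apply IsGreatest.csSup_eq
  constructor
  · rcases le_total (f 1 + ra - c₂) (f 0) with h | h
    · refine ⟨![c₁, ra - c₁], pair_feas (by ring) h0c le_rfl (by linarith) (by linarith), ?_⟩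
      have := blocked_pair (c₁ := c₁) (c₂ := c₂) f c₁ (ra - c₁)
      dsimp only
      rw [this]
      simp only [max_def]; split_ifs <;> linarith
    · refine ⟨![0, ra], pair_feas (by ring) le_rfl h0c (by linarith) h1, ?_⟩
      have := blocked_pair (c₁ := c₁) (c₂ := c₂) f 0 ra
      dsimp only
      rw [this]
      simp only [max_def]; split_ifs <;> linarith
  · rintro x ⟨fa, hfa, rfl⟩
    obtain ⟨hs, g1, g2, g3, g4⟩ := mem_feas.mp hfa
    dsimp only
    rw [blocked_eq]
    simp only [max_def]; split_ifs <;> linarith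

lemma bstar_high {c₁ c₂ ra : ℝ} (hc : c₁ ≤ c₂) (f : Fin 2 → ℝ)
    (hf0 : 0 ≤ f 0) (hf0' : f 0 ≤ c₁) (hf1 : 0 ≤ f 1) (hf1' : f 1 ≤ c₂)
    (h0c : 0 ≤ c₁) (h0 : c₂ ≤ ra) (h1 : ra ≤ c₁ + c₂) :
    Bstar ![c₁, c₂] f ra = max (f 0) (max (f 1) (f 0 + f 1 + ra - c₁ - c₂)) := by
  apply IsGreatest.csSup_eq
  constructor
  · rcases le_total (f 1) (max (f 0) (f 0 + f 1 + ra - c₁ - c₂)) with h | h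
    · refine ⟨![c₁, ra - c₁], pair_feas (by ring) h0c le_rfl (by linarith) (by linarith), ?_⟩
      have := blocked_pair (c₁ := c₁) (c₂ := c₂) f c₁ (ra - c₁)
      dsimp only
      rw [this]
      simp only [max_def] at h ⊢; split_ifs at h ⊢ <;> linarith
    · refine ⟨![ra - c₂, c₂],
        pair_feas (by ring) (by linarith) (by linarith) (by linarith) le_rfl, ?_⟩
      have := blocked_pair (c₁ := c₁) (c₂ := c₂) f (ra - c₂) c₂
      dsimp only
      rw [this]
      simp only [max_def] at h ⊢; split_ifs at h ⊢ <;> linarith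
  · rintro x ⟨fa, hfa, rfl⟩
    obtain ⟨hs, g1, g2, g3, g4⟩ := mem_feas.mp hfa
    dsimp only
    rw [blocked_eq]
    simp only [max_def]; split_ifs <;> linarith

lemma bse_low {c₁ c₂ r ra : ℝ} (hc : c₁ ≤ c₂) (h0c : 0 ≤ c₁)
    (hr₁ : c₂ - c₁ ≤ r) (hr₂ : r ≤ 2 * c₁) (h0 : 0 ≤ ra) (h1 : ra ≤ c₁) :
    BSE ![c₁, c₂] r ra = max (ra - (c₁ + c₂ - r) / 2) 0 := by
  apply IsLeast.csInf_eq
  constructor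
  · refine ⟨![(r + c₁ - c₂)/2, (r - c₁ + c₂)/2],
      pair_feas (by ring) (by linarith) (by linarith) (by linarith) (by linarith), ?_⟩
    dsimp only
    rw [bstar_low hc _ (by simp; linarith) (by simp; linarith) (by simp; linarith)
      (by simp; linarith) h0 h1]
    simp only [Matrix.cons_val_zero, Matrix.cons_val_one, Matrix.head_cons]
    simp only [max_def]; split_ifs <;> linarith
  · rintro x ⟨f, hf, rfl⟩
    obtain ⟨hs, g1, g2, g3, g4⟩ := mem_feas.mp hf
    dsimp only
    rw [bstar_low hc f g1 g2 g3 g4 h0 h1]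
    simp only [max_def]; split_ifs <;> linarith

lemma bse_mid {c₁ c₂ r ra : ℝ} (hc : c₁ ≤ c₂) (h0c : 0 ≤ c₁)
    (hr₁ : c₂ - c₁ ≤ r) (hr₂ : r ≤ 2 * c₁) (h0 : c₁ ≤ ra) (h1 : ra ≤ c₂) :
    BSE ![c₁, c₂] r ra = (r + ra - c₂) / 2 := by
  apply IsLeast.csInf_eq
  constructor
  · refine ⟨![(r + ra - c₂)/2, (r - ra + c₂)/2],
      pair_feas (by ring) (by linarith) (by linarith) (by linarith) (by linarith), ?_⟩
    dsimp only
    rw [bstar_mid hc _ (by simp; linarith) (by simp; linarith) (by simp; linarith)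
      (by simp; linarith) h0c h0 h1]
    simp only [Matrix.cons_val_zero, Matrix.cons_val_one, Matrix.head_cons]
    simp only [max_def]; split_ifs <;> linarith
  · rintro x ⟨f, hf, rfl⟩
    obtain ⟨hs, g1, g2, g3, g4⟩ := mem_feas.mp hf
    dsimp only
    rw [bstar_mid hc f g1 g2 g3 g4 h0c h0 h1]
    simp only [max_def]; split_ifs <;> linarith

lemma bse_high {c₁ c₂ r ra : ℝ} (hc : c₁ ≤ c₂) (h0c : 0 ≤ c₁)
    (hr₁ : c₂ - c₁ ≤ r) (hr₂ : r ≤ 2 * c₁) (h0 : c₂ ≤ ra) (h1 : ra ≤ c₁ + c₂) :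
    BSE ![c₁, c₂] r ra = max (r / 2) (r + ra - c₁ - c₂) := by
  apply IsLeast.csInf_eq
  constructor
  · refine ⟨![r/2, r/2],
      pair_feas (by ring) (by linarith) (by linarith) (by linarith) (by linarith), ?_⟩
    dsimp only
    rw [bstar_high hc _ (by simp; linarith) (by simp; linarith) (by simp; linarith)
      (by simp; linarith) h0c h0 h1]
    simp only [Matrix.cons_val_zero, Matrix.cons_val_one, Matrix.head_cons]
    simp only [max_def]; split_ifs <;> linarith
  · rintro x ⟨f, hf, rfl⟩
    obtain ⟨hs, g1, g2, g3, g4⟩ := mem_feas.mp hf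
    dsimp only
    rw [bstar_high hc f g1 g2 g3 g4 h0c h0 h1]
    simp only [max_def]; split_ifs <;> linarith

lemma D_bounds {c₁ c₂ r ra : ℝ} (hc : c₁ ≤ c₂) (h0c : 0 ≤ c₁)
    (hr₁ : c₂ - c₁ ≤ r) (hr₂ : r ≤ 2 * c₁) {f : Fin 2 → ℝ} (hf : f ∈ Feas ![c₁, c₂] r)
    (h0 : 0 ≤ ra) (h1 : ra ≤ c₁ + c₂) :
    0 ≤ Bstar ![c₁, c₂] f ra - BSE ![c₁, c₂] r ra ∧
      Bstar ![c₁, c₂] f ra - BSE ![c₁, c₂] r ra ≤ r := by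
  obtain ⟨hs, g1, g2, g3, g4⟩ := mem_feas.mp hf
  rcases le_total ra c₁ with h | h
  · rw [bstar_low hc f g1 g2 g3 g4 h0 h, bse_low hc h0c hr₁ hr₂ h0 h]
    constructor <;> (simp only [max_def]; split_ifs <;> linarith)
  rcases le_total ra c₂ with h' | h'
  · rw [bstar_mid hc f g1 g2 g3 g4 h0c h h', bse_mid hc h0c hr₁ hr₂ h h']
    constructor <;> (simp only [max_def]; split_ifs <;> linarith)
  · rw [bstar_high hc f g1 g2 g3 g4 h0c h' h1, bse_high hc h0c hr₁ hr₂ h' h1]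
    constructor <;> (simp only [max_def]; split_ifs <;> linarith)

end Stmt4Aux
/-- Value of information in the two-link network: `V(π^a) = 0` if
`[lo,hi] ∩ [c₁,c₂] = ∅`, and `V(π^a) = (min{hi,c₂} - max{lo,c₁})/4` otherwise. -/
theorem stmt4 (c₁ c₂ r lo hi : ℝ)
    (hc₁ : 0 < c₁) (hc : c₁ ≤ c₂)
    (hr₁ : c₂ - c₁ ≤ r) (hr₂ : r ≤ 2 * c₁)
    (hlo : 0 ≤ lo) (hlh : lo ≤ hi) (hhi : hi ≤ c₁ + c₂) :
    (Set.Icc lo hi ∩ Set.Icc c₁ c₂ = ∅ →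
      sInf ((fun f => sSup ((fun ra => Bstar ![c₁, c₂] f ra - BSE ![c₁, c₂] r ra) ''
        Set.Icc lo hi)) '' Feas ![c₁, c₂] r) = 0) ∧
    (Set.Icc lo hi ∩ Set.Icc c₁ c₂ ≠ ∅ →
      sInf ((fun f => sSup ((fun ra => Bstar ![c₁, c₂] f ra - BSE ![c₁, c₂] r ra) ''
        Set.Icc lo hi)) '' Feas ![c₁, c₂] r) = (min hi c₂ - max lo c₁) / 4) := by
  have h0c : (0:ℝ) ≤ c₁ := hc₁.le
  have hr0 : 0 ≤ r := by linarith
  -- boundedness of the inner image sets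
  have hbdd : ∀ f ∈ Feas ![c₁, c₂] r,
      BddAbove ((fun ra => Bstar ![c₁, c₂] f ra - BSE ![c₁, c₂] r ra) '' Set.Icc lo hi) := by
    intro f hf
    refine ⟨r, ?_⟩
    rintro x ⟨ra, hra, rfl⟩
    exact (D_bounds hc h0c hr₁ hr₂ hf (hlo.trans hra.1) (hra.2.trans hhi)).2
  have hRnonneg : ∀ f ∈ Feas ![c₁, c₂] r,
      0 ≤ sSup ((fun ra => Bstar ![c₁, c₂] f ra - BSE ![c₁, c₂] r ra) '' Set.Icc lo hi) := by
    intro f hf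
    refine le_trans (D_bounds hc h0c hr₁ hr₂ hf hlo (hlh.trans hhi)).1 ?_
    exact le_csSup (hbdd f hf) ⟨lo, ⟨le_rfl, hlh⟩, rfl⟩
  constructor
  · -- empty intersection case
    intro hempty
    have hcase : hi < c₁ ∨ c₂ < lo := by
      by_contra hcon
      push_neg at hcon
      have hx : max lo c₁ ∈ Set.Icc lo hi ∩ Set.Icc c₁ c₂ :=
        ⟨⟨le_max_left _ _, max_le hlh hcon.1⟩, ⟨le_max_right _ _, max_le hcon.2 hc⟩⟩
      rw [hempty] at hx
      exact hx
    apply IsLeast.csInf_eq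
    constructor
    · rcases hcase with hca | hca
      · -- hi < c₁ : use equalizing profile
        refine ⟨![(r + c₁ - c₂)/2, (r - c₁ + c₂)/2],
          pair_feas (by ring) (by linarith) (by linarith) (by linarith) (by linarith), ?_⟩
        dsimp only
        have hall : ∀ ra ∈ Set.Icc lo hi,
            Bstar ![c₁, c₂] ![(r + c₁ - c₂)/2, (r - c₁ + c₂)/2] ra - BSE ![c₁, c₂] r ra = 0 := by
          intro ra hra
          have h0 : 0 ≤ ra := hlo.trans hra.1
          have h1 : ra ≤ c₁ := le_of_lt (lt_of_le_of_lt hra.2 hca)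
          rw [bstar_low hc _ (by simp; linarith) (by simp; linarith) (by simp; linarith)
            (by simp; linarith) h0 h1, bse_low hc h0c hr₁ hr₂ h0 h1]
          simp only [Matrix.cons_val_zero, Matrix.cons_val_one, Matrix.head_cons]
          simp only [max_def]; split_ifs <;> linarith
        apply IsGreatest.csSup_eq
        exact ⟨⟨lo, ⟨le_rfl, hlh⟩, hall lo ⟨le_rfl, hlh⟩⟩,
          by rintro x ⟨ra, hra, rfl⟩; exact le_of_eq (hall ra hra)⟩
      · -- c₂ < lo : use balanced profile
        refine ⟨![r/2, r/2],
          pair_feas (by ring) (by linarith) (by linarith) (by linarith) (by linarith), ?_⟩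
        dsimp only
        have hall : ∀ ra ∈ Set.Icc lo hi,
            Bstar ![c₁, c₂] ![r/2, r/2] ra - BSE ![c₁, c₂] r ra = 0 := by
          intro ra hra
          have h0 : c₂ ≤ ra := le_of_lt (lt_of_lt_of_le hca hra.1)
          have h1 : ra ≤ c₁ + c₂ := hra.2.trans hhi
          rw [bstar_high hc _ (by simp; linarith) (by simp; linarith) (by simp; linarith)
            (by simp; linarith) h0c h0 h1, bse_high hc h0c hr₁ hr₂ h0 h1]
          simp only [Matrix.cons_val_zero, Matrix.cons_val_one, Matrix.head_cons]
          simp only [max_def]; split_ifs <;> linarith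
        apply IsGreatest.csSup_eq
        exact ⟨⟨lo, ⟨le_rfl, hlh⟩, hall lo ⟨le_rfl, hlh⟩⟩,
          by rintro x ⟨ra, hra, rfl⟩; exact le_of_eq (hall ra hra)⟩
    · rintro x ⟨f, hf, rfl⟩
      exact hRnonneg f hf
  · -- nonempty intersection case
    intro hne
    obtain ⟨x, hx1, hx2⟩ := Set.nonempty_iff_ne_empty.2 hne
    set L := max lo c₁ with hLdef
    set H := min hi c₂ with hHdef
    have hLH : L ≤ H := le_trans (max_le hx1.1 hx2.1) (le_min hx1.2 hx2.2)
    have hLc₁ : c₁ ≤ L := le_max_right _ _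
    have hLlo : lo ≤ L := le_max_left _ _
    have hHc₂ : H ≤ c₂ := min_le_right _ _
    have hHhi : H ≤ hi := min_le_left _ _
    have hLc₂ : L ≤ c₂ := hLH.trans hHc₂
    have hLhi : L ≤ hi := hLH.trans hHhi
    have hc₁H : c₁ ≤ H := hLc₁.trans hLH
    have hloH : lo ≤ H := hLlo.trans hLH
    set t₀ := (2*r + L + H - 2*c₂)/4 with ht₀
    have hf₀ : ![t₀, r - t₀] ∈ Feas ![c₁, c₂] r :=
      pair_feas (by ring) (by simp only [ht₀]; linarith) (by simp only [ht₀]; linarith)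
        (by simp only [ht₀]; linarith) (by simp only [ht₀]; linarith)
    apply IsLeast.csInf_eq
    constructor
    · refine ⟨![t₀, r - t₀], hf₀, ?_⟩
      dsimp only
      apply IsGreatest.csSup_eq
      constructor
      · -- value (H - L)/4 attained at ra = L
        refine ⟨L, ⟨hLlo, hLhi⟩, ?_⟩
        dsimp only
        rw [bstar_mid hc _ (by simp; linarith) (by simp; linarith) (by simp; linarith)
          (by simp; linarith) h0c hLc₁ hLc₂, bse_mid hc h0c hr₁ hr₂ hLc₁ hLc₂]
        simp only [Matrix.cons_val_zero, Matrix.cons_val_one, Matrix.head_cons]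
        simp only [max_def]; split_ifs <;> linarith
      · rintro y ⟨ra, hra, rfl⟩
        have h0 : 0 ≤ ra := hlo.trans hra.1
        have h1 : ra ≤ c₁ + c₂ := hra.2.trans hhi
        dsimp only
        rcases le_total ra c₁ with h | h
        · have hLc : L ≤ c₁ := max_le (hra.1.trans h) le_rfl
          rw [bstar_low hc _ (by simp; linarith) (by simp; linarith) (by simp; linarith)
            (by simp; linarith) h0 h, bse_low hc h0c hr₁ hr₂ h0 h]
          simp only [Matrix.cons_val_zero, Matrix.cons_val_one, Matrix.head_cons]
          simp only [max_def]; split_ifs <;> linarith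
        rcases le_total ra c₂ with h' | h'
        · have hL : L ≤ ra := max_le hra.1 h
          have hH : ra ≤ H := le_min hra.2 h'
          rw [bstar_mid hc _ (by simp; linarith) (by simp; linarith) (by simp; linarith)
            (by simp; linarith) h0c h h', bse_mid hc h0c hr₁ hr₂ h h']
          simp only [Matrix.cons_val_zero, Matrix.cons_val_one, Matrix.head_cons]
          simp only [max_def]; split_ifs <;> linarith
        · have hcH : c₂ ≤ H := le_min (h'.trans hra.2) le_rfl
          rw [bstar_high hc _ (by simp; linarith) (by simp; linarith) (by simp; linarith)
            (by simp; linarith) h0c h' h1, bse_high hc h0c hr₁ hr₂ h' h1]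
          simp only [Matrix.cons_val_zero, Matrix.cons_val_one, Matrix.head_cons]
          simp only [max_def]; split_ifs <;> linarith
    · rintro y ⟨f, hf, rfl⟩
      obtain ⟨hs, g1, g2, g3, g4⟩ := mem_feas.mp hf
      dsimp only
      have hDL : Bstar ![c₁, c₂] f L - BSE ![c₁, c₂] r L ≤
          sSup ((fun ra => Bstar ![c₁, c₂] f ra - BSE ![c₁, c₂] r ra) '' Set.Icc lo hi) :=
        le_csSup (hbdd f hf) ⟨L, ⟨hLlo, hLhi⟩, rfl⟩
      have hDH : Bstar ![c₁, c₂] f H - BSE ![c₁, c₂] r H ≤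
          sSup ((fun ra => Bstar ![c₁, c₂] f ra - BSE ![c₁, c₂] r ra) '' Set.Icc lo hi) :=
        le_csSup (hbdd f hf) ⟨H, ⟨hloH, hHhi⟩, rfl⟩
      rw [bstar_mid hc f g1 g2 g3 g4 h0c hLc₁ hLc₂, bse_mid hc h0c hr₁ hr₂ hLc₁ hLc₂] at hDL
      rw [bstar_mid hc f g1 g2 g3 g4 h0c hc₁H hHc₂, bse_mid hc h0c hr₁ hr₂ hc₁H hHc₂] at hDH
      have m1 : f 0 ≤ max (f 0) (f 1 + L - c₂) := le_max_left _ _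
      have m2 : f 1 + H - c₂ ≤ max (f 0) (f 1 + H - c₂) := le_max_right _ _
      linarith
end
end

section
/- Consider a two-link parallel network with capacities 0 ≤ c_1 ≤ c_2, let 0 ≤ r ≤ c_1 + c_2, 0 ≤ r^a ≤ c_1 + c_2, and let f ∈ F(c,r). Define the attack profiles f^{a1}(r^a) := ( min{r^a, c_1}, max{r^a − c_1, 0} ) and f^{a2}(r^a) := ( max{r^a − c_2, 0}, min{r^a, c_2} ). Then max_{f^a ∈ F^a(c,r^a)} B(f, f^a) = max{ B(f, f^{a1}(r^a)), B(f, f^{a2}(r^a)) }. -/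
open Finset

noncomputable section

/-- In a two-link network, the attacker's best-response value against any
routing `f` is attained by one of the two extreme attacks `f^{a1}(ra)` or `f^{a2}(ra)`. -/
theorem stmt5 (c₁ c₂ r ra : ℝ) (hc0 : 0 ≤ c₁) (hc : c₁ ≤ c₂)
    (hr0 : 0 ≤ r) (hrC : r ≤ c₁ + c₂) (hra0 : 0 ≤ ra) (hraC : ra ≤ c₁ + c₂)
    (f : Fin 2 → ℝ) (hf : f ∈ Feas ![c₁, c₂] r) :
    sSup ((fun fa => Blocked ![c₁, c₂] f fa) '' Feas ![c₁, c₂] ra) =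
      max (Blocked ![c₁, c₂] f ![min ra c₁, max (ra - c₁) 0])
          (Blocked ![c₁, c₂] f ![max (ra - c₂) 0, min ra c₂]) := by
  set L := max (ra - c₂) 0 with hL
  set R := min ra c₁ with hR
  obtain ⟨hfsum, hfb⟩ := hf
  rw [Fin.sum_univ_two] at hfsum
  have hf0 := hfb 0
  have hf1 := hfb 1
  simp only [Matrix.cons_val_zero, Matrix.cons_val_one, Matrix.head_cons] at hf0 hf1
  have hm1 : ra - R = max (ra - c₁) 0 := by
    rcases le_total ra c₁ with h | h
    · rw [hR, min_eq_left h, max_eq_right (by linarith)]; ring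
    · rw [hR, min_eq_right h, max_eq_left (by linarith)]
  have hm2 : ra - L = min ra c₂ := by
    rcases le_total ra c₂ with h | h
    · rw [hL, max_eq_right (by linarith), min_eq_left h]; ring
    · rw [hL, max_eq_left (by linarith), min_eq_right h]; ring
  -- feasibility of the two extreme attacks
  have hfa1 : (![R, max (ra - c₁) 0] : Fin 2 → ℝ) ∈ Feas ![c₁, c₂] ra := by
    refine ⟨?_, ?_⟩
    · rw [Fin.sum_univ_two]
      simp only [Matrix.cons_val_zero, Matrix.cons_val_one, Matrix.head_cons]
      rw [← hm1]; ring
    · rw [Fin.forall_fin_two]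
      simp only [Matrix.cons_val_zero, Matrix.cons_val_one, Matrix.head_cons]
      exact ⟨⟨le_min hra0 hc0, min_le_right _ _⟩,
        ⟨le_max_right _ _, max_le (by linarith) (by linarith)⟩⟩
  have hfa2 : (![L, min ra c₂] : Fin 2 → ℝ) ∈ Feas ![c₁, c₂] ra := by
    refine ⟨?_, ?_⟩
    · rw [Fin.sum_univ_two]
      simp only [Matrix.cons_val_zero, Matrix.cons_val_one, Matrix.head_cons]
      rw [← hm2]; ring
    · rw [Fin.forall_fin_two]
      simp only [Matrix.cons_val_zero, Matrix.cons_val_one, Matrix.head_cons]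
      exact ⟨⟨le_max_right _ _, max_le (by linarith) hc0⟩,
        ⟨le_min hra0 (by linarith), min_le_right _ _⟩⟩
  -- the pointwise bound
  have hB : ∀ fa ∈ Feas (![c₁, c₂] : Fin 2 → ℝ) ra,
      Blocked ![c₁, c₂] f fa ≤
        max (Blocked ![c₁, c₂] f ![R, max (ra - c₁) 0])
            (Blocked ![c₁, c₂] f ![L, min ra c₂]) := by
    rintro fa ⟨hsum, hb⟩
    rw [Fin.sum_univ_two] at hsum
    have h0 := hb 0
    have h1 := hb 1
    simp only [Matrix.cons_val_zero, Matrix.cons_val_one, Matrix.head_cons] at h0 h1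
    unfold Blocked
    rw [Fin.sum_univ_two, Fin.sum_univ_two, Fin.sum_univ_two]
    simp only [Matrix.cons_val_zero, Matrix.cons_val_one, Matrix.head_cons]
    have hfa1eq : fa 1 = ra - fa 0 := by linarith
    rw [hfa1eq, ← hm1, ← hm2]
    -- now a convexity-in-endpoints argument
    have hLx : L ≤ fa 0 := by
      apply max_le
      · linarith
      · linarith
    have hxR : fa 0 ≤ R := le_min (by linarith) h0.2
    set x := fa 0 with hx
    rcases le_total (f 0 + x - c₁) 0 with hA | hA <;>
      rcases le_total (f 1 + (ra - x) - c₂) 0 with hBc | hBc <;> rw [le_max_iff]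
    · left
      have t1 := le_max_right (f 0 + R - c₁) (0 : ℝ)
      have t2 := le_max_right (f 1 + (ra - R) - c₂) (0 : ℝ)
      rw [max_eq_right hA, max_eq_right hBc]
      linarith
    · right
      have t1 := le_max_right (f 0 + L - c₁) (0 : ℝ)
      have t2 := le_max_left (f 1 + (ra - L) - c₂) (0 : ℝ)
      rw [max_eq_right hA, max_eq_left hBc]
      linarith
    · left
      have t1 := le_max_left (f 0 + R - c₁) (0 : ℝ)
      have t2 := le_max_right (f 1 + (ra - R) - c₂) (0 : ℝ)
      rw [max_eq_left hA, max_eq_right hBc]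
      linarith
    · left
      have t1 := le_max_left (f 0 + R - c₁) (0 : ℝ)
      have t2 := le_max_left (f 1 + (ra - R) - c₂) (0 : ℝ)
      rw [max_eq_left hA, max_eq_left hBc]
      linarith
  have hbdd : BddAbove ((fun fa => Blocked ![c₁, c₂] f fa) '' Feas ![c₁, c₂] ra) := by
    refine ⟨max (Blocked ![c₁, c₂] f ![R, max (ra - c₁) 0])
        (Blocked ![c₁, c₂] f ![L, min ra c₂]), ?_⟩
    rintro b ⟨fa, hfa, rfl⟩
    exact hB fa hfa
  apply le_antisymm
  · refine csSup_le ⟨_, ⟨_, hfa1, rfl⟩⟩ ?_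
    rintro b ⟨fa, hfa, rfl⟩
    exact hB fa hfa
  · apply max_le
    · exact le_csSup hbdd ⟨_, hfa1, rfl⟩
    · exact le_csSup hbdd ⟨_, hfa2, rfl⟩
end
end

section
/- Consider a two-link parallel network with capacities 0 ≤ c_1 ≤ c_2, let 0 ≤ r ≤ c_1 + c_2, let f ∈ F(c,r), and suppose c_1 ≤ r^a ≤ c_2. Then B*(f, r^a) = max{ f_1, r − f_1 + r^a − c_2 }. -/
open Finset

noncomputable section

/-- In a two-link network with `c₁ ≤ ra ≤ c₂`, the attacker's best-response
value is `max{f₁, r - f₁ + ra - c₂}`. -/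
theorem stmt6 (c₁ c₂ r ra : ℝ) (hc0 : 0 ≤ c₁) (hc : c₁ ≤ c₂)
    (hr0 : 0 ≤ r) (hrC : r ≤ c₁ + c₂)
    (f : Fin 2 → ℝ) (hf : f ∈ Feas ![c₁, c₂] r)
    (hra1 : c₁ ≤ ra) (hra2 : ra ≤ c₂) :
    Bstar ![c₁, c₂] f ra = max (f 0) (r - f 0 + ra - c₂) := by
  have hfs : f 0 + f 1 = r := by simpa [Fin.sum_univ_two] using hf.1
  have hf0 := hf.2 0
  have hf1 := hf.2 1
  simp only [Matrix.cons_val_zero, Matrix.cons_val_one, Matrix.head_cons] at hf0 hf1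
  set M := max (f 0) (r - f 0 + ra - c₂) with hM
  have hA : f 0 ≤ M := le_max_left _ _
  have hBm : r - f 0 + ra - c₂ ≤ M := le_max_right _ _
  -- upper bound
  have hub : ∀ x ∈ (fun fa => Blocked ![c₁, c₂] f fa) '' Feas ![c₁, c₂] ra, x ≤ M := by
    rintro x ⟨fa, hfa, rfl⟩
    have hsum : fa 0 + fa 1 = ra := by simpa [Fin.sum_univ_two] using hfa.1
    have h0 := hfa.2 0
    have h1 := hfa.2 1
    simp only [Matrix.cons_val_zero, Matrix.cons_val_one, Matrix.head_cons] at h0 h1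
    have hBl : Blocked ![c₁, c₂] f fa
        = max (f 0 + fa 0 - c₁) 0 + max (f 1 + fa 1 - c₂) 0 := by
      simp [Blocked, Fin.sum_univ_two]
    simp only [hBl]
    rcases max_cases (f 0 + fa 0 - c₁) 0 with ⟨e1, t1⟩ | ⟨e1, t1⟩ <;>
      rcases max_cases (f 1 + fa 1 - c₂) 0 with ⟨e2, t2⟩ | ⟨e2, t2⟩ <;>
      rw [e1, e2] <;> linarith
  -- attaining attack
  have hmem : M ∈ (fun fa => Blocked ![c₁, c₂] f fa) '' Feas ![c₁, c₂] ra := by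
    rcases le_or_gt (r - f 0 + ra - c₂) (f 0) with h | h
    · refine ⟨![c₁, ra - c₁], ?_, ?_⟩
      · refine ⟨by simp [Fin.sum_univ_two], ?_⟩
        intro e
        fin_cases e <;> norm_num <;> (try constructor) <;> linarith
      · have hBl : Blocked ![c₁, c₂] f ![c₁, ra - c₁]
            = max (f 0 + c₁ - c₁) 0 + max (f 1 + (ra - c₁) - c₂) 0 := by
          simp [Blocked, Fin.sum_univ_two]
        have e1 : max (f 0 + c₁ - c₁) 0 = f 0 := by
          rw [max_eq_left] <;> linarith
        have e2 : max (f 1 + (ra - c₁) - c₂) 0 = 0 := by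
          rw [max_eq_right] <;> linarith
        have : M = f 0 := max_eq_left h
        simp only [hBl, e1, e2, this]; ring
    · refine ⟨![0, ra], ?_, ?_⟩
      · refine ⟨by simp [Fin.sum_univ_two], ?_⟩
        intro e
        fin_cases e <;> norm_num <;> (try constructor) <;> linarith
      · have hBl : Blocked ![c₁, c₂] f ![0, ra]
            = max (f 0 + 0 - c₁) 0 + max (f 1 + ra - c₂) 0 := by
          simp [Blocked, Fin.sum_univ_two]
        have e1 : max (f 0 + 0 - c₁) 0 = 0 := by
          rw [max_eq_right] <;> linarith
        have e2 : max (f 1 + ra - c₂) 0 = f 1 + ra - c₂ := by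
          rw [max_eq_left] <;> linarith
        have : M = r - f 0 + ra - c₂ := max_eq_right (le_of_lt h)
        simp only [hBl, e1, e2, this]; linarith
  refine le_antisymm ?_ ?_
  · exact csSup_le ⟨M, hmem⟩ hub
  · exact le_csSup ⟨M, hub⟩ hmem
end
end

section
/- Consider a two-link parallel network with capacities 0 ≤ c_1 ≤ c_2, and suppose r, r^a satisfy c_1 ≤ r^a ≤ c_2, r − c_2 ≤ r^a, and c_2 ≤ r + r^a ≤ 2 c_1 + c_2. Then B^SE(r, r^a) = (r + r^a − c_2)/2, and for every f ∈ F(c,r), B*(f, r^a) − B^SE(r, r^a) = | f_1 − (r + r^a − c_2)/2 |. -/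
open Finset

noncomputable section

/-- In a two-link network with `c₁ ≤ ra ≤ c₂`, `r - c₂ ≤ ra` and
`c₂ ≤ r + ra ≤ 2c₁ + c₂`, the Stackelberg value is `(r + ra - c₂)/2` and the regret of any
routing `f` is `|f₁ - (r + ra - c₂)/2|`. -/
theorem stmt7 (c₁ c₂ r ra : ℝ) (hc0 : 0 ≤ c₁) (hc : c₁ ≤ c₂)
    (hra1 : c₁ ≤ ra) (hra2 : ra ≤ c₂) (hr1 : r - c₂ ≤ ra)
    (hsum1 : c₂ ≤ r + ra) (hsum2 : r + ra ≤ 2 * c₁ + c₂) :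
    BSE ![c₁, c₂] r ra = (r + ra - c₂) / 2 ∧
      ∀ f ∈ Feas ![c₁, c₂] r,
        Bstar ![c₁, c₂] f ra - BSE ![c₁, c₂] r ra = |f 0 - (r + ra - c₂) / 2| := by

  set M := r + ra - c₂ with hM
  have hr0 : 0 ≤ r := by linarith
  have hM0 : 0 ≤ M := by linarith
  have hM2 : M ≤ 2 * c₁ := by linarith
  -- Bstar formula
  have key : ∀ f ∈ Feas ![c₁, c₂] r,
      Bstar ![c₁, c₂] f ra = max (f 0) (M - f 0) := by
    rintro f ⟨hfs, hfb⟩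
    have hf0 := hfb 0
    have hf1 := hfb 1
    simp only [Matrix.cons_val_zero, Matrix.cons_val_one, Matrix.head_cons] at hf0 hf1
    have hfs' : f 0 + f 1 = r := by simpa [Fin.sum_univ_two] using hfs
    have hub : ∀ b ∈ (fun fa => Blocked ![c₁, c₂] f fa) '' Feas ![c₁, c₂] ra,
        b ≤ max (f 0) (M - f 0) := by
      rintro b ⟨fa, ⟨has, hab⟩, rfl⟩
      have ha0 := hab 0
      have ha1 := hab 1
      simp only [Matrix.cons_val_zero, Matrix.cons_val_one, Matrix.head_cons] at ha0 ha1
      have has' : fa 0 + fa 1 = ra := by simpa [Fin.sum_univ_two] using has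
      simp only [Blocked, Fin.sum_univ_two, Matrix.cons_val_zero, Matrix.cons_val_one,
        Matrix.head_cons]
      rcases max_cases (f 0 + fa 0 - c₁) 0 with ⟨e1, h1⟩ | ⟨e1, h1⟩ <;>
        rcases max_cases (f 1 + fa 1 - c₂) 0 with ⟨e2, h2⟩ | ⟨e2, h2⟩ <;>
        rw [e1, e2] <;>
        rcases le_total (f 0) (M - f 0) with h | h <;>
        [rw [max_eq_right h]; rw [max_eq_left h]; rw [max_eq_right h]; rw [max_eq_left h];
         rw [max_eq_right h]; rw [max_eq_left h]; rw [max_eq_right h]; rw [max_eq_left h]] <;>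
        linarith
    -- witness attacks
    have hmem1 : (![0, ra] : Fin 2 → ℝ) ∈ Feas ![c₁, c₂] ra := by
      refine ⟨by simp [Fin.sum_univ_two], ?_⟩
      intro e
      fin_cases e <;> norm_num <;> first | (constructor <;> linarith) | linarith
    have hmem2 : (![c₁, ra - c₁] : Fin 2 → ℝ) ∈ Feas ![c₁, c₂] ra := by
      refine ⟨by simp [Fin.sum_univ_two], ?_⟩
      intro e
      fin_cases e <;> norm_num <;> first | (constructor <;> linarith) | linarith
    have hbdd : BddAbove ((fun fa => Blocked ![c₁, c₂] f fa) '' Feas ![c₁, c₂] ra) :=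
      ⟨_, hub⟩
    apply le_antisymm
    · exact csSup_le ⟨_, ⟨_, hmem1, rfl⟩⟩ hub
    · rcases le_total (f 0) (M - f 0) with h | h
      · have hval : Blocked ![c₁, c₂] f ![0, ra] = max (f 0) (M - f 0) := by
          simp only [Blocked, Fin.sum_univ_two, Matrix.cons_val_zero, Matrix.cons_val_one,
            Matrix.head_cons]
          rw [max_eq_right h, max_eq_right (by linarith : f 0 + 0 - c₁ ≤ 0),
            max_eq_left (by linarith : (0:ℝ) ≤ f 1 + ra - c₂)]
          linarith
        rw [← hval]
        exact le_csSup hbdd ⟨_, hmem1, rfl⟩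
      · have hval : Blocked ![c₁, c₂] f ![c₁, ra - c₁] = max (f 0) (M - f 0) := by
          simp only [Blocked, Fin.sum_univ_two, Matrix.cons_val_zero, Matrix.cons_val_one,
            Matrix.head_cons]
          rw [max_eq_left h, max_eq_left (by linarith : (0:ℝ) ≤ f 0 + c₁ - c₁),
            max_eq_right (by linarith : f 1 + (ra - c₁) - c₂ ≤ 0)]
          linarith
        rw [← hval]
        exact le_csSup hbdd ⟨_, hmem2, rfl⟩
  -- the optimal routing
  have hstar : (![M / 2, r - M / 2] : Fin 2 → ℝ) ∈ Feas ![c₁, c₂] r := by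
    refine ⟨by simp [Fin.sum_univ_two], ?_⟩
    intro e
    fin_cases e <;> norm_num <;> first | (constructor <;> linarith) | linarith
  have hBSE : BSE ![c₁, c₂] r ra = M / 2 := by
    have hlb : ∀ b ∈ (fun f => Bstar ![c₁, c₂] f ra) '' Feas ![c₁, c₂] r, M / 2 ≤ b := by
      rintro b ⟨f, hf, rfl⟩
      dsimp only
      rw [key f hf]
      rcases le_total (f 0) (M - f 0) with h | h
      · rw [max_eq_right h]; linarith
      · rw [max_eq_left h]; linarith
    have hvs : Bstar ![c₁, c₂] ![M / 2, r - M / 2] ra = M / 2 := by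
      rw [key _ hstar]
      simp only [Matrix.cons_val_zero]
      rw [max_eq_left (by linarith)]
    apply le_antisymm
    · rw [← hvs]
      exact csInf_le ⟨_, hlb⟩ ⟨_, hstar, rfl⟩
    · exact le_csInf ⟨_, ⟨_, hstar, rfl⟩⟩ hlb
  refine ⟨by rw [hBSE], ?_⟩
  intro f hf
  rw [hBSE, key f hf]
  rcases le_total (f 0) (M / 2) with h | h
  · rw [max_eq_right (by linarith), abs_of_nonpos (by linarith)]
    ring
  · rw [max_eq_left (by linarith), abs_of_nonneg (by linarith)]
end
end

section
/- Let E be a parallel network with capacities c, f ∈ F(c,r), and f^a ∈ F^a(c,r^a). If there exist edges e, e' ∈ E with f_e + f^a_e > c_e and f_{e'} + f^a_{e'} < c_{e'}, then f does not minimize B(·, f^a) over F(c,r): there exists f̄ ∈ F(c,r) with B(f̄, f^a) < B(f, f^a). In particular, (f, f^a) is not a Nash equilibrium. -/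
open Finset

noncomputable section

/-- If one edge is over capacity and another is strictly under capacity,
then `f` is not a best response to `fa`, so `(f, fa)` is not a Nash equilibrium. -/
theorem stmt10 {E : Type*} [Fintype E] [Nonempty E]
    (c : E → ℝ) (hc : ∀ e, 0 ≤ c e) (r ra : ℝ)
    (f fa : E → ℝ) (hf : f ∈ Feas c r) (hfa : fa ∈ Feas c ra)
    (e e' : E) (h1 : c e < f e + fa e) (h2 : f e' + fa e' < c e') :
    (∃ f' ∈ Feas c r, Blocked c f' fa < Blocked c f fa) ∧ ¬ IsNash c r ra f fa := by
  classical
  obtain ⟨hfsum, hfb⟩ := hf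
  obtain ⟨hfasum, hfab⟩ := hfa
  have hne : e ≠ e' := by intro h; subst h; linarith
  have hfe_pos : 0 < f e := by have := (hfab e).2; linarith
  set ε := min (f e + fa e - c e) (min (f e) (c e' - f e' - fa e')) with hεdef
  have hεpos : 0 < ε := by
    refine lt_min (by linarith) (lt_min hfe_pos (by linarith))
  have hε1 : ε ≤ f e + fa e - c e := min_le_left _ _
  have hε2 : ε ≤ f e := le_trans (min_le_right _ _) (min_le_left _ _)
  have hε3 : ε ≤ c e' - f e' - fa e' := le_trans (min_le_right _ _) (min_le_right _ _)
  set f' : E → ℝ := fun x => f x - (if x = e then ε else 0) + (if x = e' then ε else 0)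
    with hf'def
  have hf'mem : f' ∈ Feas c r := by
    constructor
    · simp [hf'def, Finset.sum_add_distrib, Finset.sum_sub_distrib,
        Finset.sum_ite_eq', hfsum]
    · intro x
      rcases eq_or_ne x e with rfl | hxe
      · have h0 := (hfab x).1
        have h1' := (hfb x).2
        simp only [hf'def, if_pos rfl, if_neg hne, if_true, eq_self_iff_true]
        constructor <;> linarith
      · rcases eq_or_ne x e' with rfl | hxe'
        · have h0 := (hfab x).1
          have h1' := (hfb x).1
          simp only [hf'def, if_neg hxe, if_pos rfl, if_true, eq_self_iff_true]
          constructor <;> linarith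
        · simp only [hf'def, if_neg hxe, if_neg hxe']
          simpa using hfb x
  have hlt : Blocked c f' fa < Blocked c f fa := by
    unfold Blocked
    apply Finset.sum_lt_sum
    · intro x _
      rcases eq_or_ne x e with rfl | hxe
      · simp only [hf'def, if_pos rfl, if_neg hne, if_true, eq_self_iff_true]
        have : max (f x - ε + 0 + fa x - c x) 0 = f x + fa x - c x - ε := by
          rw [max_eq_left]; ring_nf; linarith
        rw [this, max_eq_left (by linarith)]
        linarith
      · rcases eq_or_ne x e' with rfl | hxe'
        · simp only [hf'def, if_neg hxe, if_pos rfl, if_true, eq_self_iff_true]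
          rw [max_eq_right (by linarith), max_eq_right (by linarith)]
        · simp only [hf'def, if_neg hxe, if_neg hxe']
          simp
    · refine ⟨e, Finset.mem_univ e, ?_⟩
      simp only [hf'def, if_pos rfl, if_neg hne, if_true, eq_self_iff_true]
      have : max (f e - ε + 0 + fa e - c e) 0 = f e + fa e - c e - ε := by
        rw [max_eq_left]; ring_nf; linarith
      rw [this, max_eq_left (by linarith)]
      linarith
  refine ⟨⟨f', hf'mem, hlt⟩, ?_⟩
  intro ⟨_, _, hmin, _⟩
  exact absurd (hmin f' hf'mem) (not_le.mpr hlt)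
end
end

section
/- Let E be a parallel network with capacities c and let 0 ≤ r ≤ C(E). Define g := max_{∅≠E'⊆E} (C(E') − r)/|E'| and the routing profile f^lo by f^lo_e := max{ c_e − g, 0 }. Then f^lo is feasible: Σ_{e∈E} f^lo_e = r and 0 ≤ f^lo_e ≤ c_e for all e, i.e., f^lo ∈ F(c,r). -/
open Finset

noncomputable section

/-- The routing profile `f^lo_e = max{c_e - g, 0}` is feasible, where
`g = max_{∅≠E'⊆E} (C(E') - r)/|E'|`. -/
theorem stmt11 {E : Type*} [Fintype E] [Nonempty E]
    (c : E → ℝ) (hc : ∀ e, 0 ≤ c e) (r : ℝ) (hr0 : 0 ≤ r) (hrC : r ≤ ∑ e, c e) :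
    (fun e => max (c e - gval c r) 0) ∈ Feas c r := by
  classical
  set g := gval c r with hgdef
  have hmem : ∀ s : Finset E, s.Nonempty →
      s ∈ (univ.powerset.filter fun s : Finset E => s.Nonempty) := by
    intro s hs; simp [Finset.mem_filter, hs]
  have hle : ∀ s : Finset E, s.Nonempty → ((∑ e ∈ s, c e) - r) / s.card ≤ g := by
    intro s hs
    exact Finset.le_sup' (f := fun s : Finset E => ((∑ e ∈ s, c e) - r) / s.card) (hmem s hs)
  have hg0 : 0 ≤ g := by
    refine le_trans ?_ (hle univ Finset.univ_nonempty)
    apply div_nonneg (by linarith) (by exact_mod_cast Nat.zero_le _)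
  -- attaining subset
  obtain ⟨s, hs, hgs⟩ := Finset.exists_mem_eq_sup'
    (⟨univ, by simp [Finset.univ_nonempty]⟩ :
      (univ.powerset.filter fun s : Finset E => s.Nonempty).Nonempty)
    (fun s : Finset E => ((∑ e ∈ s, c e) - r) / s.card)
  have hsne : s.Nonempty := (Finset.mem_filter.mp hs).2
  have hscard : (0 : ℝ) < s.card := by exact_mod_cast Finset.card_pos.mpr hsne
  have hkey : (∑ e ∈ s, c e) - (s.card : ℝ) * g = r := by
    have : g = ((∑ e ∈ s, c e) - r) / s.card := hgs
    field_simp at this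
    linarith
  -- lower bound
  have hlow : r ≤ ∑ e, max (c e - g) 0 := by
    have h1 : ∑ e ∈ s, (c e - g) ≤ ∑ e ∈ s, max (c e - g) 0 :=
      Finset.sum_le_sum fun e _ => le_max_left _ _
    have h2 : ∑ e ∈ s, max (c e - g) 0 ≤ ∑ e, max (c e - g) 0 :=
      Finset.sum_le_sum_of_subset_of_nonneg (Finset.subset_univ s)
        (fun e _ _ => le_max_right _ _)
    have h3 : ∑ e ∈ s, (c e - g) = (∑ e ∈ s, c e) - (s.card : ℝ) * g := by
      rw [Finset.sum_sub_distrib, Finset.sum_const, nsmul_eq_mul]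
    linarith
  -- upper bound
  have hup : ∑ e, max (c e - g) 0 ≤ r := by
    set S := univ.filter (fun e => g < c e) with hSdef
    have hsplit : ∑ e, max (c e - g) 0 = ∑ e ∈ S, (c e - g) := by
      rw [← Finset.sum_filter_add_sum_filter_not univ (fun e => g < c e)
        (fun e => max (c e - g) 0)]
      have h1 : ∑ e ∈ S, max (c e - g) 0 = ∑ e ∈ S, (c e - g) := by
        apply Finset.sum_congr rfl
        intro e he
        have := (Finset.mem_filter.mp he).2
        exact max_eq_left (by linarith)
      have h2 : ∑ e ∈ univ.filter (fun e => ¬ g < c e), max (c e - g) 0 = 0 := by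
        apply Finset.sum_eq_zero
        intro e he
        have := (Finset.mem_filter.mp he).2
        exact max_eq_right (by push_neg at this; linarith)
      rw [h1, h2, add_zero]
    rw [hsplit]
    rcases Finset.eq_empty_or_nonempty S with hS | hS
    · simp [hS]; linarith
    · have hScard : (0 : ℝ) < S.card := by exact_mod_cast Finset.card_pos.mpr hS
      have := hle S hS
      rw [div_le_iff₀ hScard] at this
      have h3 : ∑ e ∈ S, (c e - g) = (∑ e ∈ S, c e) - (S.card : ℝ) * g := by
        rw [Finset.sum_sub_distrib, Finset.sum_const, nsmul_eq_mul]
      linarith [mul_comm g (S.card : ℝ)]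
  refine ⟨by linarith, fun e => ⟨le_max_right _ _, ?_⟩⟩
  rcases le_or_gt (c e - g) 0 with h | h
  · simp only [max_eq_right h]; exact hc e
  · simp only [max_eq_left h.le]; linarith
end
end

section
/- Let E be a parallel network with capacities c and let 0 ≤ r ≤ C(E). Define h := max_{∅≠E'⊆E} (r − C(E∖E'))/|E'| and the routing profile f^hi by f^hi_e := min{ c_e, h }. Then f^hi is feasible: Σ_{e∈E} f^hi_e = r and 0 ≤ f^hi_e ≤ c_e for all e, i.e., f^hi ∈ F(c,r). -/
open Finset

noncomputable section

/-- The routing profile `f^hi_e = min{c_e, h}` is feasible, where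
`h = max_{∅≠E'⊆E} (r - C(E∖E'))/|E'|`. -/
theorem stmt12 {E : Type*} [Fintype E] [Nonempty E] [DecidableEq E]
    (c : E → ℝ) (hc : ∀ e, 0 ≤ c e) (r : ℝ) (hr0 : 0 ≤ r) (hrC : r ≤ ∑ e, c e) :
    (fun e => min (c e) (hval c r)) ∈ Feas c r := by
  classical
  set h := hval c r with hh
  have hPne : (univ.powerset.filter fun s : Finset E => s.Nonempty).Nonempty :=
    ⟨univ, by simp [Finset.univ_nonempty]⟩
  have hle : ∀ s : Finset E, s.Nonempty → (r - ∑ e ∈ univ \ s, c e) / s.card ≤ h := by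
    intro s hs
    rw [hh, hval]
    exact Finset.le_sup' (fun s : Finset E => (r - ∑ e ∈ univ \ s, c e) / (s.card : ℝ)) (Finset.mem_filter.mpr ⟨Finset.mem_powerset.mpr (Finset.subset_univ s), hs⟩)
  obtain ⟨S₀, hS₀mem, hS₀⟩ := Finset.exists_mem_eq_sup' hPne
    (fun s : Finset E => (r - ∑ e ∈ univ \ s, c e) / s.card)
  have hS₀ne : S₀.Nonempty := (Finset.mem_filter.mp hS₀mem).2
  have hn0 : (0:ℝ) < S₀.card := by exact_mod_cast hS₀ne.card_pos
  have hsd : ∀ s : Finset E, ∑ e ∈ univ \ s, c e = (∑ e, c e) - ∑ e ∈ s, c e := by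
    intro s; exact Finset.sum_sdiff_eq_sub (Finset.subset_univ s)
  have key : r - ((∑ e, c e) - ∑ e ∈ S₀, c e) = h * S₀.card := by
    have : h = (r - ∑ e ∈ univ \ S₀, c e) / S₀.card := hS₀
    rw [hsd] at this
    field_simp at this
    linarith
  have h0 : 0 ≤ h := by
    have := hle univ Finset.univ_nonempty
    simp only [Finset.sdiff_self, Finset.sum_empty, sub_zero] at this
    have hcard : (0:ℝ) < (univ : Finset E).card := by
      exact_mod_cast Finset.univ_nonempty.card_pos
    have : r / (univ : Finset E).card ≤ h := this
    have h1 : 0 ≤ r / (univ : Finset E).card := div_nonneg hr0 hcard.le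
    linarith
  have hAin : ∀ e ∈ S₀, h ≤ c e := by
    intro e he
    by_cases h1 : (S₀.erase e).Nonempty
    · have h2 := hle _ h1
      rw [hsd] at h2
      have h3 : ∑ x ∈ S₀.erase e, c x = (∑ x ∈ S₀, c x) - c e :=
        Finset.sum_erase_eq_sub he
      have h4 : ((S₀.erase e).card : ℝ) = S₀.card - 1 := by
        rw [Finset.card_erase_of_mem he]
        have : 1 ≤ S₀.card := hS₀ne.card_pos
        push_cast [this]; ring
      rw [h3, h4] at h2
      have hm1 : (0:ℝ) < S₀.card - 1 := by
        have : (0:ℝ) < (S₀.erase e).card := by exact_mod_cast h1.card_pos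
        rw [h4] at this; exact this
      rw [div_le_iff₀ hm1] at h2
      nlinarith
    · have hS1 : S₀ = {e} := by
        rw [Finset.not_nonempty_iff_eq_empty] at h1
        apply Finset.eq_singleton_iff_unique_mem.mpr
        refine ⟨he, fun x hx => ?_⟩
        by_contra hne
        exact absurd (Finset.mem_erase.mpr ⟨hne, hx⟩) (by simp [h1])
      rw [hS1] at key
      simp at key
      linarith
  set A : Finset E := univ.filter (fun e => h ≤ c e) with hA
  have hSA : S₀ ⊆ A := fun e he => Finset.mem_filter.mpr ⟨Finset.mem_univ e, hAin e he⟩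
  have hAne : A.Nonempty := hS₀ne.mono hSA
  have hAcard : (0:ℝ) < A.card := by exact_mod_cast hAne.card_pos
  have ineq1 : r - ((∑ e, c e) - ∑ e ∈ A, c e) ≤ h * A.card := by
    have := hle A hAne
    rw [hsd, div_le_iff₀ hAcard] at this
    linarith
  have hsplit : ∑ e ∈ A, c e = (∑ e ∈ A \ S₀, c e) + ∑ e ∈ S₀, c e :=
    (Finset.sum_sdiff hSA).symm
  have hcardsplit : ((A \ S₀).card : ℝ) + S₀.card = A.card := by
    exact_mod_cast Finset.card_sdiff_add_card_eq_card hSA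
  have ineq2lb : ((A \ S₀).card : ℝ) * h ≤ ∑ e ∈ A \ S₀, c e := by
    have := Finset.card_nsmul_le_sum (A \ S₀) c h
      (fun x hx => (Finset.mem_filter.mp (Finset.mem_sdiff.mp hx).1).2)
    simpa [nsmul_eq_mul] using this
  have heq : r - ((∑ e, c e) - ∑ e ∈ A, c e) = h * A.card := by
    have : h * A.card ≤ r - ((∑ e, c e) - ∑ e ∈ A, c e) := by
      rw [hsplit]
      nlinarith [key, ineq2lb, hcardsplit]
    linarith
  constructor
  · have hsum : ∑ e, min (c e) h
        = (∑ e ∈ A, h) + ∑ e ∈ univ.filter (fun e => ¬ h ≤ c e), c e := by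
      rw [← Finset.sum_filter_add_sum_filter_not univ (fun e => h ≤ c e)]
      congr 1
      · exact Finset.sum_congr rfl fun x hx =>
          min_eq_right (Finset.mem_filter.mp hx).2
      · exact Finset.sum_congr rfl fun x hx =>
          min_eq_left (le_of_not_ge (Finset.mem_filter.mp hx).2)
    have hnot : ∑ e ∈ univ.filter (fun e => ¬ h ≤ c e), c e
        = (∑ e, c e) - ∑ e ∈ A, c e := by
      rw [Finset.filter_not, hsd]
    rw [hsum, hnot, Finset.sum_const, nsmul_eq_mul]
    linarith [heq]
  · intro e
    exact ⟨le_min (hc e) h0, min_le_left _ _⟩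
end
end

section
/- Let E be a parallel network with capacities c, let 0 ≤ r ≤ C(E), define g := max_{∅≠E'⊆E} (C(E') − r)/|E'| and f^lo_e := max{ c_e − g, 0 }. If 0 ≤ r^a ≤ min{ g, C(E) }, then for every attack f^a ∈ F^a(c,r^a) and every edge e, f^lo_e + f^a_e ≤ c_e; consequently B(f^lo, f^a) = 0 for every f^a ∈ F^a(c,r^a). -/
open Finset

noncomputable section

/-- If `0 ≤ ra ≤ min{g, C(E)}`, then under the routing `f^lo` no attack can
block any traffic. -/
theorem stmt13 {E : Type*} [Fintype E] [Nonempty E]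
    (c : E → ℝ) (hc : ∀ e, 0 ≤ c e) (r ra : ℝ) (hr0 : 0 ≤ r) (hrC : r ≤ ∑ e, c e)
    (hra0 : 0 ≤ ra) (hra : ra ≤ min (gval c r) (∑ e, c e)) :
    ∀ fa ∈ Feas c ra,
      (∀ e, max (c e - gval c r) 0 + fa e ≤ c e) ∧
        Blocked c (fun e => max (c e - gval c r) 0) fa = 0 := by
  intro fa ⟨hsum, hfa⟩
  have hrag : ra ≤ gval c r := le_trans hra (min_le_left _ _)
  have key : ∀ e, max (c e - gval c r) 0 + fa e ≤ c e := by
    intro e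
    have hle : fa e ≤ ra := by
      rw [← hsum]
      exact Finset.single_le_sum (fun i _ => (hfa i).1) (mem_univ e)
    rcases le_or_gt (c e - gval c r) 0 with h | h
    · rw [max_eq_right h]; simpa using (hfa e).2
    · rw [max_eq_left h.le]; linarith
  refine ⟨key, ?_⟩
  unfold Blocked
  apply Finset.sum_eq_zero
  intro e _
  have := key e
  rw [max_eq_right]; linarith
end
end

section
/- Let E be a parallel network with capacities c, let 0 ≤ r ≤ C(E), define h := max_{∅≠E'⊆E} (r − C(E∖E'))/|E'| and f^hi_e := min{ c_e, h }. If C(E) − h ≤ r^a ≤ C(E), then for every attack f^a ∈ F^a(c,r^a) and every edge e, f^hi_e + f^a_e ≥ c_e; consequently B(f^hi, f^a) = r + r^a − C(E) for every f^a ∈ F^a(c,r^a). -/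
open Finset

noncomputable section

/-- If `C(E) - h ≤ ra ≤ C(E)`, then under the routing `f^hi` every edge is
saturated against every attack, so exactly `r + ra - C(E)` traffic is blocked. -/
theorem stmt14 {E : Type*} [Fintype E] [Nonempty E] [DecidableEq E]
    (c : E → ℝ) (hc : ∀ e, 0 ≤ c e) (r ra : ℝ) (hr0 : 0 ≤ r) (hrC : r ≤ ∑ e, c e)
    (hra1 : (∑ e, c e) - hval c r ≤ ra) (hra2 : ra ≤ ∑ e, c e) :
    ∀ fa ∈ Feas c ra,
      (∀ e, c e ≤ min (c e) (hval c r) + fa e) ∧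
        Blocked c (fun e => min (c e) (hval c r)) fa = r + ra - ∑ e, c e := by

  classical
  intro fa hfa
  obtain ⟨hfasum, hfab⟩ := hfa
  set h := hval c r with hh
  -- a maximizing subset
  obtain ⟨s, hs_mem, hs_eq⟩ := Finset.exists_mem_eq_sup'
    (⟨univ, by simp [Finset.univ_nonempty]⟩ :
      ((univ.powerset.filter fun s : Finset E => s.Nonempty)).Nonempty)
    (fun s => (r - ∑ e ∈ univ \ s, c e) / (s.card : ℝ))
  have hs_ne : s.Nonempty := (Finset.mem_filter.mp hs_mem).2
  have hcard_pos : (0 : ℝ) < s.card := by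
    exact_mod_cast Finset.card_pos.mpr hs_ne
  have hle : ∀ t : Finset E, t.Nonempty →
      (r - ∑ e ∈ univ \ t, c e) / (t.card : ℝ) ≤ h := by
    intro t ht
    have htm : t ∈ univ.powerset.filter fun s : Finset E => s.Nonempty := by
      simp [Finset.mem_filter, ht]
    rw [hh, hval]
    exact Finset.le_sup' (fun s : Finset E => (r - ∑ e ∈ univ \ s, c e) / (s.card : ℝ)) htm
  have heq : h * s.card = r - ∑ e ∈ univ \ s, c e := by
    have := hs_eq
    rw [hh, hval, this]
    field_simp
  -- upper bound: edges outside s have capacity ≤ h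
  have hub : ∀ e ∉ s, c e ≤ h := by
    intro e he
    have hmem : e ∈ univ \ s := by simp [he]
    have hsum : ∑ x ∈ univ \ insert e s, c x = (∑ x ∈ univ \ s, c x) - c e := by
      have : univ \ insert e s = (univ \ s).erase e := by
        ext a; simp [Finset.mem_erase, and_comm]
      rw [this, Finset.sum_erase_eq_sub hmem]
    have hkey := hle (insert e s) (Finset.insert_nonempty _ _)
    rw [hsum, Finset.card_insert_of_notMem he] at hkey
    have hpos : (0:ℝ) < ((s.card + 1 : ℕ) : ℝ) := by positivity
    rw [div_le_iff₀ hpos] at hkey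
    push_cast at hkey
    nlinarith [heq]
  -- lower bound: edges in s have capacity ≥ h
  have hlb : ∀ e ∈ s, h ≤ c e := by
    intro e he
    rcases eq_or_lt_of_le (Finset.one_le_card.mpr hs_ne) with h1 | h2
    · -- s = {e}
      obtain ⟨a, ha⟩ := Finset.card_eq_one.mp h1.symm
      have hea : e = a := by rw [ha] at he; simpa using he
      subst hea
      rw [ha] at heq
      have hsd : ∑ x ∈ univ \ {e}, c x = (∑ x, c x) - c e := by
        have : univ \ ({e} : Finset E) = univ.erase e := by
          ext a; simp [Finset.mem_erase, and_comm]
        rw [this, Finset.sum_erase_eq_sub (Finset.mem_univ e)]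
      rw [hsd] at heq
      simp at heq
      linarith
    · -- |s| ≥ 2
      have htne : (s.erase e).Nonempty := by
        rw [← Finset.card_pos, Finset.card_erase_of_mem he]
        omega
      have hsum : ∑ x ∈ univ \ s.erase e, c x = (∑ x ∈ univ \ s, c x) + c e := by
        have hset : univ \ s.erase e = insert e (univ \ s) := by
          ext a
          by_cases hae : a = e <;> simp [Finset.mem_erase, hae, he]
        rw [hset, Finset.sum_insert (by simp [he])]
        ring
      have hkey := hle (s.erase e) htne
      rw [hsum, Finset.card_erase_of_mem he] at hkey
      have hpos : (0:ℝ) < ((s.card - 1 : ℕ) : ℝ) := by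
        have : 2 ≤ s.card := h2
        have : 1 ≤ s.card - 1 := by omega
        exact_mod_cast Nat.lt_of_lt_of_le Nat.zero_lt_one this
      rw [div_le_iff₀ hpos] at hkey
      have hc2 : ((s.card - 1 : ℕ) : ℝ) = (s.card : ℝ) - 1 := by
        have : 1 ≤ s.card := Finset.one_le_card.mpr hs_ne
        push_cast [this]; ring
      rw [hc2] at hkey
      nlinarith [heq]
  -- the high routing sums to exactly r
  have hsum_min : ∑ e, min (c e) h = r := by
    have hsplit : ∑ e ∈ univ \ s, min (c e) h + ∑ e ∈ s, min (c e) h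
        = ∑ e, min (c e) h := Finset.sum_sdiff (Finset.subset_univ s)
    have h1 : ∑ e ∈ s, min (c e) h = s.card * h := by
      rw [Finset.sum_congr rfl fun e he => min_eq_right (hlb e he)]
      simp [mul_comm]
    have h2 : ∑ e ∈ univ \ s, min (c e) h = ∑ e ∈ univ \ s, c e := by
      refine Finset.sum_congr rfl fun e he => min_eq_left ?_
      exact hub e (by simpa using (Finset.mem_sdiff.mp he).2)
    rw [h1, h2] at hsplit
    rw [← hsplit]
    nlinarith [heq]
  -- part 1: saturation
  have part1 : ∀ e, c e ≤ min (c e) h + fa e := by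
    intro e
    rcases le_total (c e) h with hce | hce
    · rw [min_eq_left hce]
      linarith [(hfab e).1]
    · rw [min_eq_right hce]
      have hA : ∑ x ∈ univ.erase e, fa x ≤ ∑ x ∈ univ.erase e, c x :=
        Finset.sum_le_sum fun x _ => (hfab x).2
      have hfa_e : fa e + ∑ x ∈ univ.erase e, fa x = ra := by
        rw [Finset.add_sum_erase _ _ (Finset.mem_univ e)]; exact hfasum
      have hc_e : c e + ∑ x ∈ univ.erase e, c x = ∑ x, c x := by
        rw [Finset.add_sum_erase _ _ (Finset.mem_univ e)]
      linarith
  refine ⟨part1, ?_⟩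
  have : Blocked c (fun e => min (c e) h) fa
      = ∑ e, (min (c e) h + fa e - c e) := by
    unfold Blocked
    refine Finset.sum_congr rfl fun e _ => ?_
    exact max_eq_left (by linarith [part1 e])
  rw [this, Finset.sum_sub_distrib, Finset.sum_add_distrib, hsum_min, hfasum]
end
end

section
/- Let E be a parallel network with capacities c, let 0 < r ≤ C(E) and 0 ≤ r^a ≤ C(E), and suppose r^a > max_{∅≠E'⊆E} (C(E') − r)/|E'|. Then for every routing profile f ∈ F(c,r) there exists an attack f^a ∈ F^a(c,r^a) with B(f, f^a) > 0; consequently B^SE(r, r^a) > 0. -/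
open Finset

noncomputable section

lemma waterfill {E : Type*} [Fintype E] [DecidableEq E] (c : E → ℝ) (hc : ∀ e, 0 ≤ c e)
    (A : Finset E) : ∀ (s : ℝ), 0 ≤ s → s ≤ ∑ e ∈ A, c e →
      ∃ g : E → ℝ, (∀ e, 0 ≤ g e ∧ g e ≤ c e) ∧ (∀ e, e ∉ A → g e = 0) ∧ ∑ e ∈ A, g e = s := by
  induction A using Finset.induction_on with
  | empty =>
      intro s hs0 hs1
      simp only [Finset.sum_empty] at hs1
      exact ⟨0, fun e => ⟨le_rfl, hc e⟩, fun _ _ => rfl, by simp [le_antisymm hs1 hs0]⟩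
  | insert _ _ ha ih =>
      rename_i a A
      intro s hs0 hs1
      rw [Finset.sum_insert ha] at hs1
      have hcA : 0 ≤ ∑ e ∈ A, c e := Finset.sum_nonneg fun e _ => hc e
      have h0 : 0 ≤ s - min s (c a) := by
        have := min_le_left s (c a); linarith
      have h1 : s - min s (c a) ≤ ∑ e ∈ A, c e := by
        rcases le_total s (c a) with h | h
        · rw [min_eq_left h]; linarith
        · rw [min_eq_right h]; linarith
      obtain ⟨g, hg1, hg2, hg3⟩ := ih _ h0 h1
      refine ⟨Function.update g a (min s (c a)), ?_, ?_, ?_⟩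
      · intro e
        rcases eq_or_ne e a with rfl | he
        · rw [Function.update_self]; exact ⟨le_min hs0 (hc e), min_le_right _ _⟩
        · rw [Function.update_of_ne he]; exact hg1 e
      · intro e he
        have hea : e ≠ a := fun h => he (h ▸ Finset.mem_insert_self a A)
        rw [Function.update_of_ne hea]
        exact hg2 e fun h => he (Finset.mem_insert_of_mem h)
      · rw [Finset.sum_insert ha, Function.update_self]
        have : ∑ e ∈ A, Function.update g a (min s (c a)) e = ∑ e ∈ A, g e :=
          Finset.sum_congr rfl fun e he => Function.update_of_ne (fun h : e = a => ha (h ▸ he)) _ _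
        rw [this, hg3]; ring

/-- If `ra > max_{∅≠E'⊆E} (C(E') - r)/|E'|`, then against every routing
profile some attack blocks a positive amount of traffic; hence `B^SE(r, ra) > 0`. -/
theorem stmt15 {E : Type*} [Fintype E] [Nonempty E]
    (c : E → ℝ) (hc : ∀ e, 0 ≤ c e) (r ra : ℝ)
    (hr0 : 0 < r) (hrC : r ≤ ∑ e, c e) (hra0 : 0 ≤ ra) (hraC : ra ≤ ∑ e, c e)
    (hra : gval c r < ra) :
    (∀ f ∈ Feas c r, ∃ fa ∈ Feas c ra, 0 < Blocked c f fa) ∧ 0 < BSE c r ra := by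
  classical
  set n := Fintype.card E with hn
  have hn0 : 0 < (n : ℝ) := by exact_mod_cast Fintype.card_pos
  have hmemuniv : (univ : Finset E) ∈ (univ.powerset.filter fun s : Finset E => s.Nonempty) := by
    simp [Finset.univ_nonempty]
  have hgval0 : 0 ≤ gval c r := by
    have h := Finset.le_sup' (f := fun s : Finset E => ((∑ e ∈ s, c e) - r) / s.card)
      (b := (univ : Finset E)) hmemuniv
    refine le_trans ?_ h
    rw [Finset.card_univ]
    apply div_nonneg (by linarith) hn0.le
  have hrag : 0 < ra - gval c r := by linarith
  set δ := min (r / n) ((ra - gval c r) / n) with hδ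
  have hδ0 : 0 < δ := lt_min (div_pos hr0 hn0) (div_pos hrag hn0)
  -- key uniform lemma
  have key : ∀ f ∈ Feas c r, ∃ fa ∈ Feas c ra, δ ≤ Blocked c f fa := by
    intro f hf
    obtain ⟨hsum, hbd⟩ := hf
    have hex : ∃ e₀, δ ≤ f e₀ - max (c e₀ - ra) 0 := by
      by_contra hcon
      push_neg at hcon
      set A := univ.filter (fun e => ra ≤ c e) with hAdef
      have hsplit : ∑ e, max (c e - ra) 0 = ∑ e ∈ A, (c e - ra) := by
        rw [← Finset.sum_filter_add_sum_filter_not univ (fun e => ra ≤ c e)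
          (fun e => max (c e - ra) 0)]
        have h1 : ∑ e ∈ univ.filter (fun e => ra ≤ c e), max (c e - ra) 0
            = ∑ e ∈ A, (c e - ra) := by
          refine Finset.sum_congr rfl fun e he => ?_
          rw [Finset.mem_filter] at he
          exact max_eq_left (by linarith [he.2])
        have h2 : ∑ e ∈ univ.filter (fun e => ¬ ra ≤ c e), max (c e - ra) 0 = 0 := by
          refine Finset.sum_eq_zero fun e he => ?_
          rw [Finset.mem_filter] at he
          exact max_eq_right (by push_neg at he; linarith [he.2])
        rw [h1, h2, add_zero]
      have hlt : r < (∑ e ∈ A, (c e - ra)) + n * δ := by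
        calc r = ∑ e, f e := hsum.symm
        _ < ∑ e, (max (c e - ra) 0 + δ) :=
            Finset.sum_lt_sum_of_nonempty Finset.univ_nonempty
              (fun e _ => by linarith [hcon e])
        _ = (∑ e ∈ A, (c e - ra)) + n * δ := by
            rw [Finset.sum_add_distrib, hsplit, Finset.sum_const, Finset.card_univ,
              nsmul_eq_mul]
      rcases A.eq_empty_or_nonempty with hAe | hAne
      · rw [hAe, Finset.sum_empty, zero_add] at hlt
        have h1 : (n : ℝ) * δ ≤ n * (r / n) :=
          mul_le_mul_of_nonneg_left (min_le_left _ _) hn0.le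
        rw [mul_div_cancel₀ _ hn0.ne'] at h1
        linarith
      · have hmemA : A ∈ (univ.powerset.filter fun s : Finset E => s.Nonempty) := by
          simp [hAne]
        have hgA : ((∑ e ∈ A, c e) - r) / A.card ≤ gval c r :=
          Finset.le_sup' (f := fun s : Finset E => ((∑ e ∈ s, c e) - r) / s.card) hmemA
        have hcard : 0 < (A.card : ℝ) := by exact_mod_cast hAne.card_pos
        have h2 : (∑ e ∈ A, c e) - r ≤ A.card * gval c r := by
          rw [div_le_iff₀ hcard] at hgA; linarith
        have h3 : ∑ e ∈ A, (c e - ra) = (∑ e ∈ A, c e) - A.card * ra := by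
          rw [Finset.sum_sub_distrib, Finset.sum_const, nsmul_eq_mul]
        have h4 : (n : ℝ) * δ ≤ ra - gval c r := by
          have h5 : (n : ℝ) * δ ≤ n * ((ra - gval c r) / n) :=
            mul_le_mul_of_nonneg_left (min_le_right _ _) hn0.le
          rw [mul_div_cancel₀ _ hn0.ne'] at h5
          exact h5
        have hA1 : (1 : ℝ) ≤ A.card := by exact_mod_cast hAne.card_pos
        have hprod : (1 : ℝ) * (ra - gval c r) ≤ A.card * (ra - gval c r) :=
          mul_le_mul_of_nonneg_right hA1 hrag.le
        nlinarith [hlt, h2, h3, h4, hprod]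
    obtain ⟨e₀, he₀⟩ := hex
    have hs0 : 0 ≤ ra - min ra (c e₀) := by
      have := min_le_left ra (c e₀); linarith
    have hsum_erase : ∑ e ∈ univ.erase e₀, c e = (∑ e, c e) - c e₀ :=
      Finset.sum_erase_eq_sub (Finset.mem_univ e₀)
    have hs1 : ra - min ra (c e₀) ≤ ∑ e ∈ univ.erase e₀, c e := by
      rcases le_total ra (c e₀) with h | h
      · rw [min_eq_left h, sub_self]
        exact Finset.sum_nonneg fun e _ => hc e
      · rw [min_eq_right h, hsum_erase]; linarith
    obtain ⟨g, hg1, hg2, hg3⟩ := waterfill c hc (univ.erase e₀) _ hs0 hs1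
    set fa : E → ℝ := fun e => if e = e₀ then min ra (c e₀) else g e with hfadef
    have hfa : fa ∈ Feas c ra := by
      constructor
      · rw [← Finset.sum_erase_add univ fa (Finset.mem_univ e₀)]
        have h1 : ∑ e ∈ univ.erase e₀, fa e = ∑ e ∈ univ.erase e₀, g e :=
          Finset.sum_congr rfl fun e he => by
            simp only [hfadef, if_neg (Finset.ne_of_mem_erase he)]
        have h2 : fa e₀ = min ra (c e₀) := by simp [hfadef]
        rw [h1, hg3, h2]; ring
      · intro e
        rcases eq_or_ne e e₀ with rfl | he
        · simp only [hfadef, if_pos rfl]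
          exact ⟨le_min hra0 (hc e), min_le_right _ _⟩
        · simp only [hfadef, if_neg he]
          exact hg1 e
    refine ⟨fa, hfa, ?_⟩
    have hfae : fa e₀ = min ra (c e₀) := by simp [hfadef]
    have hkey : f e₀ - max (c e₀ - ra) 0 = f e₀ + fa e₀ - c e₀ := by
      rw [hfae]
      rcases le_total ra (c e₀) with h | h
      · rw [min_eq_left h, max_eq_left (by linarith)]; ring
      · rw [min_eq_right h, max_eq_right (by linarith)]; ring
    calc δ ≤ f e₀ - max (c e₀ - ra) 0 := he₀
    _ = f e₀ + fa e₀ - c e₀ := hkey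
    _ ≤ max (f e₀ + fa e₀ - c e₀) 0 := le_max_left _ _
    _ ≤ Blocked c f fa :=
        Finset.single_le_sum (f := fun e => max (f e + fa e - c e) 0)
          (fun i _ => le_max_right _ _) (Finset.mem_univ e₀)
  -- feasible routing exists
  obtain ⟨f₀, hf₀1, _, hf₀3⟩ := waterfill c hc univ r hr0.le (by simpa using hrC)
  have hf₀ : f₀ ∈ Feas c r := ⟨by simpa using hf₀3, hf₀1⟩
  -- blocked traffic is bounded above by ra
  have hub : ∀ f ∈ Feas c r, ∀ fa' ∈ Feas c ra, Blocked c f fa' ≤ ra := by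
    intro f hf fa' hfa'
    calc Blocked c f fa' ≤ ∑ e, fa' e := by
          refine Finset.sum_le_sum fun e _ => ?_
          have h1 := (hf.2 e).2
          have h2 := (hfa'.2 e).1
          exact max_le (by linarith) h2
    _ = ra := hfa'.1
  have hBstar : ∀ f ∈ Feas c r, δ ≤ Bstar c f ra := by
    intro f hf
    obtain ⟨fa, hfa, hb⟩ := key f hf
    refine hb.trans (le_csSup ?_ ⟨fa, hfa, rfl⟩)
    exact ⟨ra, by rintro x ⟨fa', hfa', rfl⟩; exact hub f hf fa' hfa'⟩
  have hBSE : δ ≤ BSE c r ra := by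
    refine le_csInf ⟨_, ⟨f₀, hf₀, rfl⟩⟩ ?_
    rintro b ⟨f, hf, rfl⟩
    exact hBstar f hf
  constructor
  · intro f hf
    obtain ⟨fa, hfa, hb⟩ := key f hf
    exact ⟨fa, hfa, hδ0.trans_le hb⟩
  · exact hδ0.trans_le hBSE
end
end

section
/- Let E be a parallel network with capacities c and let 0 ≤ r ≤ C(E). Then the function r^a ↦ B^SE(r, r^a) is nondecreasing and 1-Lipschitz on [0, C(E)]: for all 0 ≤ r^a ≤ r̂^a ≤ C(E), 0 ≤ B^SE(r, r̂^a) − B^SE(r, r^a) ≤ r̂^a − r^a. -/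
open Finset

noncomputable section

section Aux

variable {E : Type*} [Fintype E]

lemma blocked_nonneg (c f fa : E → ℝ) : 0 ≤ Blocked c f fa :=
  Finset.sum_nonneg fun _ _ => le_max_right _ _

lemma blocked_le_budget {c f : E → ℝ} (hf : ∀ e, f e ≤ c e) {fa : E → ℝ}
    (hfa : ∀ e, 0 ≤ fa e) : Blocked c f fa ≤ ∑ e, fa e :=
  Finset.sum_le_sum fun e _ => max_le (by linarith [hf e]) (hfa e)

lemma blocked_mono {c f fa fa' : E → ℝ} (h : ∀ e, fa e ≤ fa' e) :
    Blocked c f fa ≤ Blocked c f fa' :=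
  Finset.sum_le_sum fun e _ => max_le_max (by linarith [h e]) le_rfl

lemma blocked_lip {c f fa fa' : E → ℝ} (h : ∀ e, fa e ≤ fa' e) :
    Blocked c f fa' ≤ Blocked c f fa + ∑ e, (fa' e - fa e) := by
  rw [Blocked, Blocked, ← Finset.sum_add_distrib]
  refine Finset.sum_le_sum fun e _ => ?_
  have h1 := le_max_left (f e + fa e - c e) 0
  have h2 := le_max_right (f e + fa e - c e) 0
  have h3 := h e
  exact max_le (by linarith) (by linarith)

lemma feas_extend (c : E → ℝ) {ra ra' : ℝ} (h1 : ra ≤ ra') (h2 : ra' ≤ ∑ e, c e)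
    {fa : E → ℝ} (hfa : fa ∈ Feas c ra) :
    ∃ fa' ∈ Feas c ra', (∀ e, fa e ≤ fa' e) ∧ ∑ e, (fa' e - fa e) = ra' - ra := by
  obtain ⟨hsum, hb⟩ := hfa
  by_cases hS : ∑ e, c e - ra = 0
  · have hra' : ra' = ra := by linarith
    exact ⟨fa, ⟨by rw [hsum, hra'], hb⟩, fun e => le_rfl, by simp [hra']⟩
  · have hSpos : 0 < ∑ e, c e - ra := lt_of_le_of_ne (by linarith) (Ne.symm hS)
    set t : ℝ := (ra' - ra) / (∑ e, c e - ra) with ht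
    have ht0 : 0 ≤ t := div_nonneg (by linarith) hSpos.le
    have ht1 : t ≤ 1 := (div_le_one hSpos).mpr (by linarith)
    refine ⟨fun e => fa e + t * (c e - fa e), ⟨?_, fun e => ?_⟩, fun e => ?_, ?_⟩
    · have : ∑ e, (fa e + t * (c e - fa e)) = ra + t * (∑ e, c e - ra) := by
        rw [Finset.sum_add_distrib, ← Finset.mul_sum, Finset.sum_sub_distrib, hsum]
      rw [this, ht, div_mul_cancel₀ _ hS]; ring
    · obtain ⟨hb1, hb2⟩ := hb e
      dsimp only
      constructor
      · nlinarith [mul_nonneg ht0 (sub_nonneg.mpr hb2)]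
      · nlinarith [mul_nonneg (sub_nonneg.mpr ht1) (sub_nonneg.mpr hb2)]
    · dsimp only
      nlinarith [mul_nonneg ht0 (sub_nonneg.mpr (hb e).2)]
    · have hs : ∑ e, (fa e + t * (c e - fa e) - fa e) = t * (∑ e, c e - ra) := by
        simp only [add_sub_cancel_left]
        rw [← Finset.mul_sum, Finset.sum_sub_distrib, hsum]
      rw [hs, ht, div_mul_cancel₀ _ hS]

lemma feas_shrink (c : E → ℝ) {ra ra' : ℝ} (h0 : 0 ≤ ra) (h1 : ra ≤ ra')
    {fa' : E → ℝ} (hfa' : fa' ∈ Feas c ra') :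
    ∃ fa ∈ Feas c ra, (∀ e, fa e ≤ fa' e) ∧ ∑ e, (fa' e - fa e) = ra' - ra := by
  obtain ⟨hsum, hb⟩ := hfa'
  by_cases h : ra' = 0
  · have hra : ra = 0 := le_antisymm (h ▸ h1) h0
    exact ⟨fa', ⟨by rw [hsum, h, hra], hb⟩, fun e => le_rfl, by simp [h, hra]⟩
  · have hpos : 0 < ra' := lt_of_le_of_ne (h0.trans h1) (Ne.symm h)
    set t : ℝ := ra / ra' with ht
    have ht0 : 0 ≤ t := div_nonneg h0 hpos.le
    have ht1 : t ≤ 1 := (div_le_one hpos).mpr h1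
    refine ⟨fun e => t * fa' e, ⟨?_, fun e => ?_⟩, fun e => ?_, ?_⟩
    · rw [← Finset.mul_sum, hsum, ht, div_mul_cancel₀ _ h]
    · obtain ⟨hb1, hb2⟩ := hb e
      refine ⟨mul_nonneg ht0 hb1, ?_⟩
      dsimp only
      nlinarith [mul_nonneg (sub_nonneg.mpr ht1) hb1]
    · dsimp only
      nlinarith [mul_nonneg (sub_nonneg.mpr ht1) (hb e).1]
    · have hs : ∑ e, (fa' e - t * fa' e) = (1 - t) * ra' := by
        rw [Finset.sum_congr rfl (fun e _ => show fa' e - t * fa' e = (1 - t) * fa' e by ring),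
          ← Finset.mul_sum, hsum]
      rw [hs, ht]; field_simp

lemma feas_nonempty (c : E → ℝ) (hc : ∀ e, 0 ≤ c e) {ra : ℝ} (h0 : 0 ≤ ra)
    (h1 : ra ≤ ∑ e, c e) : (Feas c ra).Nonempty := by
  have hz : (fun _ : E => (0 : ℝ)) ∈ Feas c 0 :=
    ⟨by simp, fun e => ⟨le_rfl, hc e⟩⟩
  obtain ⟨fa, hfa, -⟩ := feas_extend c h0 h1 hz
  exact ⟨fa, hfa⟩

lemma bstar_bddAbove {c f : E → ℝ} (hf : ∀ e, f e ≤ c e) (ra : ℝ) :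
    BddAbove ((fun fa => Blocked c f fa) '' Feas c ra) := by
  refine ⟨ra, ?_⟩
  rintro b ⟨fa, ⟨hs, hb⟩, rfl⟩
  calc Blocked c f fa ≤ ∑ e, fa e := blocked_le_budget hf fun e => (hb e).1
    _ = ra := hs

lemma bstar_nonneg {c f : E → ℝ} (hf : ∀ e, f e ≤ c e) {ra : ℝ}
    (hne : (Feas c ra).Nonempty) : 0 ≤ Bstar c f ra := by
  obtain ⟨fa, hfa⟩ := hne
  exact (blocked_nonneg c f fa).trans
    (le_csSup (bstar_bddAbove hf ra) (Set.mem_image_of_mem _ hfa))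

lemma bstar_mono {c f : E → ℝ} (hf : ∀ e, f e ≤ c e) {ra ra' : ℝ}
    (h1 : ra ≤ ra') (h2 : ra' ≤ ∑ e, c e) (hne : (Feas c ra).Nonempty) :
    Bstar c f ra ≤ Bstar c f ra' := by
  apply csSup_le (hne.image _)
  rintro b ⟨fa, hfa, rfl⟩
  obtain ⟨fa', hfa', hle, -⟩ := feas_extend c h1 h2 hfa
  exact (blocked_mono hle).trans
    (le_csSup (bstar_bddAbove hf ra') (Set.mem_image_of_mem _ hfa'))

lemma bstar_lip {c f : E → ℝ} (hf : ∀ e, f e ≤ c e) {ra ra' : ℝ}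
    (h0 : 0 ≤ ra) (h1 : ra ≤ ra') (hne' : (Feas c ra').Nonempty) :
    Bstar c f ra' ≤ Bstar c f ra + (ra' - ra) := by
  apply csSup_le (hne'.image _)
  rintro b ⟨fa', hfa', rfl⟩
  obtain ⟨fa, hfa, hle, hdiff⟩ := feas_shrink c h0 h1 hfa'
  have h2 : Blocked c f fa' ≤ Blocked c f fa + (ra' - ra) := hdiff ▸ blocked_lip hle
  have h3 : Blocked c f fa ≤ Bstar c f ra :=
    le_csSup (bstar_bddAbove hf ra) (Set.mem_image_of_mem _ hfa)
  linarith

end Aux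

/-- `ra ↦ B^SE(r, ra)` is nondecreasing and 1-Lipschitz on `[0, C(E)]`. -/
theorem stmt18 {E : Type*} [Fintype E] [Nonempty E]
    (c : E → ℝ) (hc : ∀ e, 0 ≤ c e) (r : ℝ) (hr0 : 0 ≤ r) (hrC : r ≤ ∑ e, c e) :
    ∀ ra ra' : ℝ, 0 ≤ ra → ra ≤ ra' → ra' ≤ ∑ e, c e →
      0 ≤ BSE c r ra' - BSE c r ra ∧ BSE c r ra' - BSE c r ra ≤ ra' - ra := by
  intro ra ra' hra0 hle hra'
  have hra'0 : 0 ≤ ra' := hra0.trans hle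
  have hraC : ra ≤ ∑ e, c e := hle.trans hra'
  have hneF : (Feas c r).Nonempty := feas_nonempty c hc hr0 hrC
  have hnea : (Feas c ra).Nonempty := feas_nonempty c hc hra0 hraC
  have hnea' : (Feas c ra').Nonempty := feas_nonempty c hc hra'0 hra'
  set A := (fun f => Bstar c f ra) '' Feas c r with hA
  set A' := (fun f => Bstar c f ra') '' Feas c r with hA'
  have hAne : A.Nonempty := hneF.image _
  have hA'ne : A'.Nonempty := hneF.image _
  have hAb : BddBelow A := by
    refine ⟨0, ?_⟩
    rintro b ⟨f, hfF, rfl⟩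
    exact bstar_nonneg (fun e => (hfF.2 e).2) hnea
  have hA'b : BddBelow A' := by
    refine ⟨0, ?_⟩
    rintro b ⟨f, hfF, rfl⟩
    exact bstar_nonneg (fun e => (hfF.2 e).2) hnea'
  constructor
  · rw [sub_nonneg]
    apply le_csInf hA'ne
    rintro b ⟨f, hfF, rfl⟩
    calc sInf A ≤ Bstar c f ra := csInf_le hAb (Set.mem_image_of_mem _ hfF)
      _ ≤ Bstar c f ra' := bstar_mono (fun e => (hfF.2 e).2) hle hra' hnea
  · have key : sInf A' - (ra' - ra) ≤ sInf A := by
      apply le_csInf hAne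
      rintro b ⟨f, hfF, rfl⟩
      have h1 : Bstar c f ra' ≤ Bstar c f ra + (ra' - ra) :=
        bstar_lip (fun e => (hfF.2 e).2) hra0 hle hnea'
      have h2 : sInf A' ≤ Bstar c f ra' := csInf_le hA'b (Set.mem_image_of_mem _ hfF)
      linarith
    simp only [BSE, ← hA, ← hA']
    linarith
end
end
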